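/- arXiv:1808.03765 — 9 statements merged into one kernel-verified Lean document; each statement's English description precedes it below -/
import Mathlib

section
/- Let H be a separable complex Hilbert space, let m be a positive integer, and for each j = 1,…,m let {f_{ij}}_{i∈I} be a frame for H, and suppose these m families are woven frames for H with universal bounds A′, B′ > 0. If E : H → H is a bounded invertible linear operator, then the m families {E f_{ij}}_{i∈I}, j = 1,…,m, are woven frames for H with universal bounds A′·‖E⁻¹‖⁻² and B′·‖E‖². -/
/-- If a finite collection of frames for a separable Hilbert space `H` is woven with
universal bounds `A'`, `B'`, and `E` is a bounded invertible operator on `H`, then the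
images under `E` are woven frames with universal bounds `A'·‖E⁻¹‖⁻²` and `B'·‖E‖²`. -/
theorem woven_frames_map_invertible
    {H : Type*} [NormedAddCommGroup H] [InnerProductSpace ℂ H] [CompleteSpace H]
    [TopologicalSpace.SeparableSpace H]
    {I : Type*} [Countable I] {m : ℕ} (hm : 0 < m)
    (F : Fin m → I → H) (A' B' : ℝ) (hA' : 0 < A') (hB' : 0 < B')
    (hframe : ∀ j : Fin m, ∃ A B : ℝ, 0 < A ∧ 0 < B ∧ ∀ f : H,
      A * ‖f‖ ^ 2 ≤ ∑' i : I, ‖(inner ℂ f (F j i) : ℂ)‖ ^ 2 ∧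
        ∑' i : I, ‖(inner ℂ f (F j i) : ℂ)‖ ^ 2 ≤ B * ‖f‖ ^ 2)
    (hwoven : ∀ σ : Fin m → Set I, Pairwise (Function.onFun Disjoint σ) →
      (⋃ j, σ j) = Set.univ → ∀ f : H,
      A' * ‖f‖ ^ 2 ≤ ∑ j : Fin m, ∑' i : σ j, ‖(inner ℂ f (F j (i : I)) : ℂ)‖ ^ 2 ∧
      ∑ j : Fin m, ∑' i : σ j, ‖(inner ℂ f (F j (i : I)) : ℂ)‖ ^ 2 ≤ B' * ‖f‖ ^ 2)
    (E : H ≃L[ℂ] H) :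
    ∀ σ : Fin m → Set I, Pairwise (Function.onFun Disjoint σ) →
      (⋃ j, σ j) = Set.univ → ∀ f : H,
      (A' * (‖(E.symm : H →L[ℂ] H)‖ ^ 2)⁻¹) * ‖f‖ ^ 2 ≤
        ∑ j : Fin m, ∑' i : σ j, ‖(inner ℂ f (E (F j (i : I))) : ℂ)‖ ^ 2 ∧
      ∑ j : Fin m, ∑' i : σ j, ‖(inner ℂ f (E (F j (i : I))) : ℂ)‖ ^ 2 ≤
        (B' * ‖(E : H →L[ℂ] H)‖ ^ 2) * ‖f‖ ^ 2 := by
  intro σ hσ hcov f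
  set T : H →L[ℂ] H := ContinuousLinearMap.adjoint (E : H →L[ℂ] H) with hT
  have hinner : ∀ (j : Fin m) (i : I),
      ‖(inner ℂ f (E (F j i)) : ℂ)‖ = ‖(inner ℂ (T f) (F j i) : ℂ)‖ := by
    intro j i
    rw [hT, ContinuousLinearMap.adjoint_inner_left]
    rfl
  have hsum : ∀ j : Fin m, (∑' i : σ j, ‖(inner ℂ f (E (F j (i : I))) : ℂ)‖ ^ 2)
      = ∑' i : σ j, ‖(inner ℂ (T f) (F j (i : I)) : ℂ)‖ ^ 2 := by
    intro j
    exact tsum_congr fun i => by rw [hinner]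
  have hw := hwoven σ hσ hcov (T f)
  have hrw : (∑ j : Fin m, ∑' i : σ j, ‖(inner ℂ f (E (F j (i : I))) : ℂ)‖ ^ 2)
      = ∑ j : Fin m, ∑' i : σ j, ‖(inner ℂ (T f) (F j (i : I)) : ℂ)‖ ^ 2 :=
    Finset.sum_congr rfl fun j _ => hsum j
  rw [hrw]
  have hnormT : ‖T‖ = ‖(E : H →L[ℂ] H)‖ :=
    LinearIsometryEquiv.norm_map ContinuousLinearMap.adjoint _
  have hTf_le : ‖T f‖ ≤ ‖(E : H →L[ℂ] H)‖ * ‖f‖ := by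
    calc ‖T f‖ ≤ ‖T‖ * ‖f‖ := T.le_opNorm f
    _ = ‖(E : H →L[ℂ] H)‖ * ‖f‖ := by rw [hnormT]
  have hf_le : ‖f‖ ≤ ‖(E.symm : H →L[ℂ] H)‖ * ‖T f‖ := by
    have hcomp : ContinuousLinearMap.adjoint (E.symm : H →L[ℂ] H) (T f) = f := by
      rw [hT, ← ContinuousLinearMap.comp_apply, ← ContinuousLinearMap.adjoint_comp]
      have : (E : H →L[ℂ] H).comp (E.symm : H →L[ℂ] H) = ContinuousLinearMap.id ℂ H := by
        ext x; simp
      rw [this, ContinuousLinearMap.adjoint_id, ContinuousLinearMap.id_apply]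
    calc ‖f‖ = ‖ContinuousLinearMap.adjoint (E.symm : H →L[ℂ] H) (T f)‖ := by rw [hcomp]
    _ ≤ ‖ContinuousLinearMap.adjoint (E.symm : H →L[ℂ] H)‖ * ‖T f‖ :=
        ContinuousLinearMap.le_opNorm _ _
    _ = ‖(E.symm : H →L[ℂ] H)‖ * ‖T f‖ := by
          rw [LinearIsometryEquiv.norm_map ContinuousLinearMap.adjoint]
  constructor
  · have h1 : ‖f‖ ^ 2 ≤ ‖(E.symm : H →L[ℂ] H)‖ ^ 2 * ‖T f‖ ^ 2 := by
      have := mul_self_le_mul_self (norm_nonneg f) hf_le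
      nlinarith [norm_nonneg f, norm_nonneg (T f), norm_nonneg ((E.symm : H →L[ℂ] H))]
    have h2 : (A' * (‖(E.symm : H →L[ℂ] H)‖ ^ 2)⁻¹) * ‖f‖ ^ 2 ≤ A' * ‖T f‖ ^ 2 := by
      rcases eq_or_lt_of_le (norm_nonneg (E.symm : H →L[ℂ] H)) with h0 | h0
      · have hfz : ‖f‖ = 0 := by
          have : ‖f‖ ≤ 0 := by rw [← h0] at hf_le; simpa using hf_le
          linarith [norm_nonneg f]
        rw [hfz]
        simp only [ne_eq, OfNat.ofNat_ne_zero, not_false_eq_true, zero_pow, mul_zero]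
        positivity
      · have key : (‖(E.symm : H →L[ℂ] H)‖ ^ 2)⁻¹ * ‖f‖ ^ 2 ≤ ‖T f‖ ^ 2 := by
          rw [inv_mul_le_iff₀ (by positivity)]
          linarith
        calc (A' * (‖(E.symm : H →L[ℂ] H)‖ ^ 2)⁻¹) * ‖f‖ ^ 2
            = A' * ((‖(E.symm : H →L[ℂ] H)‖ ^ 2)⁻¹ * ‖f‖ ^ 2) := by ring
        _ ≤ A' * ‖T f‖ ^ 2 := mul_le_mul_of_nonneg_left key hA'.le
    exact h2.trans hw.1
  · have h1 : ‖T f‖ ^ 2 ≤ ‖(E : H →L[ℂ] H)‖ ^ 2 * ‖f‖ ^ 2 := by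
      nlinarith [norm_nonneg (T f), norm_nonneg f, norm_nonneg ((E : H →L[ℂ] H))]
    calc ∑ j : Fin m, ∑' i : σ j, ‖(inner ℂ (T f) (F j (i : I)) : ℂ)‖ ^ 2
        ≤ B' * ‖T f‖ ^ 2 := hw.2
    _ ≤ B' * (‖(E : H →L[ℂ] H)‖ ^ 2 * ‖f‖ ^ 2) := mul_le_mul_of_nonneg_left h1 hB'.le
    _ = (B' * ‖(E : H →L[ℂ] H)‖ ^ 2) * ‖f‖ ^ 2 := by ring
end

section
/- Let H be a separable complex Hilbert space. For each i ∈ I let {f_{i,j}}_{j∈J_i} be a frame for W_i = closure(span{f_{i,j}}_{j∈J_i}) with bounds A_{f_i}, B_{f_i}, let {g_{i,j}}_{j∈J_i} be a frame for V_i = closure(span{g_{i,j}}_{j∈J_i}) with bounds A_{g_i}, B_{g_i}, let ν_i, μ_i > 0, and assume 0 < inf_i A_{f_i}, sup_i B_{f_i} < ∞ and 0 < inf_i A_{g_i}, sup_i B_{g_i} < ∞. Then the following are equivalent: (a) there exist universal constants C, D > 0 such that for every σ ⊆ I and every f ∈ H, C‖f‖² ≤ Σ_{i∈σ} Σ_{j∈J_i}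 |⟨f, ν_i f_{i,j}⟩|² + Σ_{i∈σᶜ} Σ_{j∈J_i} |⟨f, μ_i g_{i,j}⟩|² ≤ D‖f‖² (i.e., {ν_i f_{i,j}} and {μ_i g_{i,j}} are woven frames for H); (b) {W_i}_{i∈I} with weights {ν_i} and {V_i}_{i∈I} with weights {μ_i} are woven fusion frames for H. -/
private lemma tsum_subtype_compl_compl {α : Type*} (s : Set α) (F : α → ℝ) :
    (∑' i : ↥sᶜᶜ, F i) = ∑' i : s, F i := by
  rw [compl_compl]

/-- The weighted local frames `{ν_i f_{i,j}}`, `{μ_i g_{i,j}}` are woven frames for `H`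
iff the spanned subspaces `{W_i}`, `{V_i}` with weights `{ν_i}`, `{μ_i}` are woven
fusion frames for `H`. -/
theorem woven_frames_iff_woven_fusion_frames
    {H : Type*} [NormedAddCommGroup H] [InnerProductSpace ℂ H] [CompleteSpace H]
    [TopologicalSpace.SeparableSpace H]
    {I : Type*} [Countable I] {J : I → Type*} [∀ i, Countable (J i)]
    (fI gI : ∀ i, J i → H) (ν μ : I → ℝ) (hν : ∀ i, 0 < ν i) (hμ : ∀ i, 0 < μ i)
    (W V : I → Submodule ℂ H) [∀ i, CompleteSpace (W i)] [∀ i, CompleteSpace (V i)]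
    (hWdef : ∀ i, W i = (Submodule.span ℂ (Set.range (fI i))).topologicalClosure)
    (hVdef : ∀ i, V i = (Submodule.span ℂ (Set.range (gI i))).topologicalClosure)
    (Afi Bfi Agi Bgi : I → ℝ) (Af Bf Ag Bg : ℝ)
    (hframeW : ∀ i, ∀ g ∈ W i,
      Afi i * ‖g‖ ^ 2 ≤ ∑' j : J i, ‖(inner ℂ g (fI i j) : ℂ)‖ ^ 2 ∧
        ∑' j : J i, ‖(inner ℂ g (fI i j) : ℂ)‖ ^ 2 ≤ Bfi i * ‖g‖ ^ 2)
    (hframeV : ∀ i, ∀ g ∈ V i,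
      Agi i * ‖g‖ ^ 2 ≤ ∑' j : J i, ‖(inner ℂ g (gI i j) : ℂ)‖ ^ 2 ∧
        ∑' j : J i, ‖(inner ℂ g (gI i j) : ℂ)‖ ^ 2 ≤ Bgi i * ‖g‖ ^ 2)
    (hAf : 0 < Af) (hAfle : ∀ i, Af ≤ Afi i) (hBfle : ∀ i, Bfi i ≤ Bf)
    (hAg : 0 < Ag) (hAgle : ∀ i, Ag ≤ Agi i) (hBgle : ∀ i, Bgi i ≤ Bg) :
    (∃ C D : ℝ, 0 < C ∧ 0 < D ∧ ∀ σ : Set I, ∀ f : H,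
      C * ‖f‖ ^ 2 ≤
        (∑' i : σ, ∑' j : J (i : I), ‖(inner ℂ f ((ν (i : I) : ℂ) • fI (i : I) j) : ℂ)‖ ^ 2) +
          (∑' i : ↥σᶜ, ∑' j : J (i : I), ‖(inner ℂ f ((μ (i : I) : ℂ) • gI (i : I) j) : ℂ)‖ ^ 2) ∧
      (∑' i : σ, ∑' j : J (i : I), ‖(inner ℂ f ((ν (i : I) : ℂ) • fI (i : I) j) : ℂ)‖ ^ 2) +
          (∑' i : ↥σᶜ, ∑' j : J (i : I), ‖(inner ℂ f ((μ (i : I) : ℂ) • gI (i : I) j) : ℂ)‖ ^ 2) ≤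
        D * ‖f‖ ^ 2) ↔
    (∃ A B : ℝ, 0 < A ∧ 0 < B ∧ ∀ σ : Set I, ∀ f : H,
      A * ‖f‖ ^ 2 ≤
        (∑' i : σ, ν (i : I) ^ 2 * ‖(Submodule.orthogonalProjection (W (i : I)) f : H)‖ ^ 2) +
          (∑' i : ↥σᶜ, μ (i : I) ^ 2 * ‖(Submodule.orthogonalProjection (V (i : I)) f : H)‖ ^ 2) ∧
      (∑' i : σ, ν (i : I) ^ 2 * ‖(Submodule.orthogonalProjection (W (i : I)) f : H)‖ ^ 2) +
          (∑' i : ↥σᶜ, μ (i : I) ^ 2 * ‖(Submodule.orthogonalProjection (V (i : I)) f : H)‖ ^ 2) ≤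
        B * ‖f‖ ^ 2) := by
  set M : ℝ := max (max Bf Bg) 1 with hMdef
  have hM0 : (0 : ℝ) < M := lt_of_lt_of_le one_pos (le_max_right _ _)
  have hBfM : Bf ≤ M := le_trans (le_max_left _ _) (le_max_left _ _)
  have hBgM : Bg ≤ M := le_trans (le_max_right _ _) (le_max_left _ _)
  set Am : ℝ := min Af Ag with hAmdef
  have hAm0 : (0 : ℝ) < Am := lt_min hAf hAg
  -- pointwise bounds for the f-side
  have hptF : ∀ (i : I) (f : H),
      Af * (ν i ^ 2 * ‖(Submodule.orthogonalProjection (W i) f : H)‖ ^ 2) ≤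
        (∑' j : J i, ‖(inner ℂ f ((ν i : ℂ) • fI i j) : ℂ)‖ ^ 2) ∧
      (∑' j : J i, ‖(inner ℂ f ((ν i : ℂ) • fI i j) : ℂ)‖ ^ 2) ≤
        M * (ν i ^ 2 * ‖(Submodule.orthogonalProjection (W i) f : H)‖ ^ 2) := by
    intro i f
    have hg : ((Submodule.orthogonalProjection (W i) f : H)) ∈ W i := (Submodule.orthogonalProjection (W i) f).2
    have hinner : ∀ j, (inner ℂ f (fI i j) : ℂ) =
        inner ℂ ((Submodule.orthogonalProjection (W i) f : H)) (fI i j) := by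
      intro j
      have hmem : fI i j ∈ W i := by
        rw [hWdef i]
        exact Submodule.le_topologicalClosure _ (Submodule.subset_span ⟨j, rfl⟩)
      have h0 : (inner ℂ (f - (Submodule.orthogonalProjection (W i) f : H)) (fI i j) : ℂ) = 0 :=
        Submodule.inner_left_of_mem_orthogonal hmem (Submodule.sub_starProjection_mem_orthogonal f)
      rw [inner_sub_left, sub_eq_zero] at h0
      exact h0
    have hterm : ∀ j, ‖(inner ℂ f ((ν i : ℂ) • fI i j) : ℂ)‖ ^ 2 =
        ν i ^ 2 * ‖(inner ℂ ((Submodule.orthogonalProjection (W i) f : H)) (fI i j) : ℂ)‖ ^ 2 := by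
      intro j
      rw [inner_smul_right, hinner j, norm_mul, mul_pow, Complex.norm_real,
        Real.norm_eq_abs, sq_abs]
    have hsum : (∑' j : J i, ‖(inner ℂ f ((ν i : ℂ) • fI i j) : ℂ)‖ ^ 2) =
        ν i ^ 2 * ∑' j : J i,
          ‖(inner ℂ ((Submodule.orthogonalProjection (W i) f : H)) (fI i j) : ℂ)‖ ^ 2 := by
      simp_rw [hterm]; exact tsum_mul_left
    obtain ⟨hlo, hhi⟩ := hframeW i _ hg
    constructor
    · rw [hsum]
      have h1 : Af * ‖(Submodule.orthogonalProjection (W i) f : H)‖ ^ 2 ≤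
          ∑' j : J i, ‖(inner ℂ ((Submodule.orthogonalProjection (W i) f : H)) (fI i j) : ℂ)‖ ^ 2 :=
        le_trans (mul_le_mul_of_nonneg_right (hAfle i) (sq_nonneg _)) hlo
      calc Af * (ν i ^ 2 * ‖(Submodule.orthogonalProjection (W i) f : H)‖ ^ 2)
          = ν i ^ 2 * (Af * ‖(Submodule.orthogonalProjection (W i) f : H)‖ ^ 2) := by ring
        _ ≤ ν i ^ 2 * ∑' j : J i,
            ‖(inner ℂ ((Submodule.orthogonalProjection (W i) f : H)) (fI i j) : ℂ)‖ ^ 2 :=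
          mul_le_mul_of_nonneg_left h1 (sq_nonneg _)
    · rw [hsum]
      have h2 : (∑' j : J i,
          ‖(inner ℂ ((Submodule.orthogonalProjection (W i) f : H)) (fI i j) : ℂ)‖ ^ 2) ≤
          M * ‖(Submodule.orthogonalProjection (W i) f : H)‖ ^ 2 :=
        le_trans hhi (mul_le_mul_of_nonneg_right (le_trans (hBfle i) hBfM) (sq_nonneg _))
      calc ν i ^ 2 * ∑' j : J i,
            ‖(inner ℂ ((Submodule.orthogonalProjection (W i) f : H)) (fI i j) : ℂ)‖ ^ 2
          ≤ ν i ^ 2 * (M * ‖(Submodule.orthogonalProjection (W i) f : H)‖ ^ 2) :=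
          mul_le_mul_of_nonneg_left h2 (sq_nonneg _)
        _ = M * (ν i ^ 2 * ‖(Submodule.orthogonalProjection (W i) f : H)‖ ^ 2) := by ring
  -- pointwise bounds for the g-side
  have hptG : ∀ (i : I) (f : H),
      Ag * (μ i ^ 2 * ‖(Submodule.orthogonalProjection (V i) f : H)‖ ^ 2) ≤
        (∑' j : J i, ‖(inner ℂ f ((μ i : ℂ) • gI i j) : ℂ)‖ ^ 2) ∧
      (∑' j : J i, ‖(inner ℂ f ((μ i : ℂ) • gI i j) : ℂ)‖ ^ 2) ≤
        M * (μ i ^ 2 * ‖(Submodule.orthogonalProjection (V i) f : H)‖ ^ 2) := by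
    intro i f
    have hg : ((Submodule.orthogonalProjection (V i) f : H)) ∈ V i := (Submodule.orthogonalProjection (V i) f).2
    have hinner : ∀ j, (inner ℂ f (gI i j) : ℂ) =
        inner ℂ ((Submodule.orthogonalProjection (V i) f : H)) (gI i j) := by
      intro j
      have hmem : gI i j ∈ V i := by
        rw [hVdef i]
        exact Submodule.le_topologicalClosure _ (Submodule.subset_span ⟨j, rfl⟩)
      have h0 : (inner ℂ (f - (Submodule.orthogonalProjection (V i) f : H)) (gI i j) : ℂ) = 0 :=
        Submodule.inner_left_of_mem_orthogonal hmem (Submodule.sub_starProjection_mem_orthogonal f)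
      rw [inner_sub_left, sub_eq_zero] at h0
      exact h0
    have hterm : ∀ j, ‖(inner ℂ f ((μ i : ℂ) • gI i j) : ℂ)‖ ^ 2 =
        μ i ^ 2 * ‖(inner ℂ ((Submodule.orthogonalProjection (V i) f : H)) (gI i j) : ℂ)‖ ^ 2 := by
      intro j
      rw [inner_smul_right, hinner j, norm_mul, mul_pow, Complex.norm_real,
        Real.norm_eq_abs, sq_abs]
    have hsum : (∑' j : J i, ‖(inner ℂ f ((μ i : ℂ) • gI i j) : ℂ)‖ ^ 2) =
        μ i ^ 2 * ∑' j : J i,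
          ‖(inner ℂ ((Submodule.orthogonalProjection (V i) f : H)) (gI i j) : ℂ)‖ ^ 2 := by
      simp_rw [hterm]; exact tsum_mul_left
    obtain ⟨hlo, hhi⟩ := hframeV i _ hg
    constructor
    · rw [hsum]
      have h1 : Ag * ‖(Submodule.orthogonalProjection (V i) f : H)‖ ^ 2 ≤
          ∑' j : J i, ‖(inner ℂ ((Submodule.orthogonalProjection (V i) f : H)) (gI i j) : ℂ)‖ ^ 2 :=
        le_trans (mul_le_mul_of_nonneg_right (hAgle i) (sq_nonneg _)) hlo
      calc Ag * (μ i ^ 2 * ‖(Submodule.orthogonalProjection (V i) f : H)‖ ^ 2)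
          = μ i ^ 2 * (Ag * ‖(Submodule.orthogonalProjection (V i) f : H)‖ ^ 2) := by ring
        _ ≤ μ i ^ 2 * ∑' j : J i,
            ‖(inner ℂ ((Submodule.orthogonalProjection (V i) f : H)) (gI i j) : ℂ)‖ ^ 2 :=
          mul_le_mul_of_nonneg_left h1 (sq_nonneg _)
    · rw [hsum]
      have h2 : (∑' j : J i,
          ‖(inner ℂ ((Submodule.orthogonalProjection (V i) f : H)) (gI i j) : ℂ)‖ ^ 2) ≤
          M * ‖(Submodule.orthogonalProjection (V i) f : H)‖ ^ 2 :=
        le_trans hhi (mul_le_mul_of_nonneg_right (le_trans (hBgle i) hBgM) (sq_nonneg _))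
      calc μ i ^ 2 * ∑' j : J i,
            ‖(inner ℂ ((Submodule.orthogonalProjection (V i) f : H)) (gI i j) : ℂ)‖ ^ 2
          ≤ μ i ^ 2 * (M * ‖(Submodule.orthogonalProjection (V i) f : H)‖ ^ 2) :=
          mul_le_mul_of_nonneg_left h2 (sq_nonneg _)
        _ = M * (μ i ^ 2 * ‖(Submodule.orthogonalProjection (V i) f : H)‖ ^ 2) := by ring
  have hTnn : ∀ (i : I) (f : H),
      (0 : ℝ) ≤ ∑' j : J i, ‖(inner ℂ f ((ν i : ℂ) • fI i j) : ℂ)‖ ^ 2 :=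
    fun i f => tsum_nonneg fun j => sq_nonneg _
  have hSnn : ∀ (i : I) (f : H),
      (0 : ℝ) ≤ ∑' j : J i, ‖(inner ℂ f ((μ i : ℂ) • gI i j) : ℂ)‖ ^ 2 :=
    fun i f => tsum_nonneg fun j => sq_nonneg _
  constructor
  · rintro ⟨C, D, hC, hD, h⟩
    -- summability of the fusion families
    have hsF : ∀ f : H, Summable
        (fun i : I => ν i ^ 2 * ‖(Submodule.orthogonalProjection (W i) f : H)‖ ^ 2) := by
      intro f
      refine summable_of_sum_le (c := D * ‖f‖ ^ 2 / Af)
        (fun i => mul_nonneg (sq_nonneg _) (sq_nonneg _)) (fun u => ?_)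
      rw [le_div_iff₀ hAf]
      have h1 := (h (↑u) f).2
      rw [Finset.tsum_subtype' u
        (fun i => ∑' j : J i, ‖(inner ℂ f ((ν i : ℂ) • fI i j) : ℂ)‖ ^ 2)] at h1
      have hnn : (0 : ℝ) ≤ ∑' i : ↥((↑u : Set I)ᶜ),
          ∑' j : J (i : I), ‖(inner ℂ f ((μ (i : I) : ℂ) • gI (i : I) j) : ℂ)‖ ^ 2 :=
        tsum_nonneg fun i => hSnn _ f
      calc (∑ i ∈ u, ν i ^ 2 * ‖(Submodule.orthogonalProjection (W i) f : H)‖ ^ 2) * Af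
          = ∑ i ∈ u, Af * (ν i ^ 2 * ‖(Submodule.orthogonalProjection (W i) f : H)‖ ^ 2) := by
            rw [Finset.sum_mul]; exact Finset.sum_congr rfl fun i _ => mul_comm _ _
        _ ≤ ∑ i ∈ u, ∑' j : J i, ‖(inner ℂ f ((ν i : ℂ) • fI i j) : ℂ)‖ ^ 2 :=
            Finset.sum_le_sum fun i _ => (hptF i f).1
        _ ≤ D * ‖f‖ ^ 2 := by linarith
    have hsG : ∀ f : H, Summable
        (fun i : I => μ i ^ 2 * ‖(Submodule.orthogonalProjection (V i) f : H)‖ ^ 2) := by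
      intro f
      refine summable_of_sum_le (c := D * ‖f‖ ^ 2 / Ag)
        (fun i => mul_nonneg (sq_nonneg _) (sq_nonneg _)) (fun u => ?_)
      rw [le_div_iff₀ hAg]
      have h1 := (h ((↑u : Set I)ᶜ) f).2
      rw [tsum_subtype_compl_compl (↑u : Set I)
        (fun i => ∑' j : J i, ‖(inner ℂ f ((μ i : ℂ) • gI i j) : ℂ)‖ ^ 2)] at h1
      rw [Finset.tsum_subtype' u
        (fun i => ∑' j : J i, ‖(inner ℂ f ((μ i : ℂ) • gI i j) : ℂ)‖ ^ 2)] at h1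
      have hnn : (0 : ℝ) ≤ ∑' i : ↥((↑u : Set I)ᶜ),
          ∑' j : J (i : I), ‖(inner ℂ f ((ν (i : I) : ℂ) • fI (i : I) j) : ℂ)‖ ^ 2 :=
        tsum_nonneg fun i => hTnn _ f
      calc (∑ i ∈ u, μ i ^ 2 * ‖(Submodule.orthogonalProjection (V i) f : H)‖ ^ 2) * Ag
          = ∑ i ∈ u, Ag * (μ i ^ 2 * ‖(Submodule.orthogonalProjection (V i) f : H)‖ ^ 2) := by
            rw [Finset.sum_mul]; exact Finset.sum_congr rfl fun i _ => mul_comm _ _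
        _ ≤ ∑ i ∈ u, ∑' j : J i, ‖(inner ℂ f ((μ i : ℂ) • gI i j) : ℂ)‖ ^ 2 :=
            Finset.sum_le_sum fun i _ => (hptG i f).1
        _ ≤ D * ‖f‖ ^ 2 := by linarith
    refine ⟨C / M, D / Am, div_pos hC hM0, div_pos hD hAm0, fun σ f => ?_⟩
    have hsFσ : Summable (fun i : σ =>
        ν (i : I) ^ 2 * ‖(Submodule.orthogonalProjection (W (i : I)) f : H)‖ ^ 2) :=
      (hsF f).subtype σ
    have hsGσ : Summable (fun i : ↥σᶜ =>
        μ (i : I) ^ 2 * ‖(Submodule.orthogonalProjection (V (i : I)) f : H)‖ ^ 2) :=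
      (hsG f).subtype σᶜ
    have hsTσ : Summable (fun i : σ =>
        ∑' j : J (i : I), ‖(inner ℂ f ((ν (i : I) : ℂ) • fI (i : I) j) : ℂ)‖ ^ 2) :=
      Summable.of_nonneg_of_le (fun i => hTnn _ f) (fun i => (hptF (i : I) f).2)
        (hsFσ.mul_left M)
    have hsSσ : Summable (fun i : ↥σᶜ =>
        ∑' j : J (i : I), ‖(inner ℂ f ((μ (i : I) : ℂ) • gI (i : I) j) : ℂ)‖ ^ 2) :=
      Summable.of_nonneg_of_le (fun i => hSnn _ f) (fun i => (hptG (i : I) f).2)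
        (hsGσ.mul_left M)
    have h1 : (∑' i : σ, ∑' j : J (i : I),
        ‖(inner ℂ f ((ν (i : I) : ℂ) • fI (i : I) j) : ℂ)‖ ^ 2) ≤
        M * ∑' i : σ, ν (i : I) ^ 2 * ‖(Submodule.orthogonalProjection (W (i : I)) f : H)‖ ^ 2 := by
      calc (∑' i : σ, ∑' j : J (i : I),
            ‖(inner ℂ f ((ν (i : I) : ℂ) • fI (i : I) j) : ℂ)‖ ^ 2)
          ≤ ∑' i : σ, M * (ν (i : I) ^ 2 *
            ‖(Submodule.orthogonalProjection (W (i : I)) f : H)‖ ^ 2) :=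
            Summable.tsum_le_tsum (fun i => (hptF (i : I) f).2) hsTσ (hsFσ.mul_left M)
        _ = M * ∑' i : σ, ν (i : I) ^ 2 *
            ‖(Submodule.orthogonalProjection (W (i : I)) f : H)‖ ^ 2 := tsum_mul_left
    have h2 : (∑' i : ↥σᶜ, ∑' j : J (i : I),
        ‖(inner ℂ f ((μ (i : I) : ℂ) • gI (i : I) j) : ℂ)‖ ^ 2) ≤
        M * ∑' i : ↥σᶜ, μ (i : I) ^ 2 * ‖(Submodule.orthogonalProjection (V (i : I)) f : H)‖ ^ 2 := by
      calc (∑' i : ↥σᶜ, ∑' j : J (i : I),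
            ‖(inner ℂ f ((μ (i : I) : ℂ) • gI (i : I) j) : ℂ)‖ ^ 2)
          ≤ ∑' i : ↥σᶜ, M * (μ (i : I) ^ 2 *
            ‖(Submodule.orthogonalProjection (V (i : I)) f : H)‖ ^ 2) :=
            Summable.tsum_le_tsum (fun i => (hptG (i : I) f).2) hsSσ (hsGσ.mul_left M)
        _ = M * ∑' i : ↥σᶜ, μ (i : I) ^ 2 *
            ‖(Submodule.orthogonalProjection (V (i : I)) f : H)‖ ^ 2 := tsum_mul_left
    have h3 : Am * (∑' i : σ, ν (i : I) ^ 2 *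
        ‖(Submodule.orthogonalProjection (W (i : I)) f : H)‖ ^ 2) ≤
        ∑' i : σ, ∑' j : J (i : I),
          ‖(inner ℂ f ((ν (i : I) : ℂ) • fI (i : I) j) : ℂ)‖ ^ 2 := by
      calc Am * (∑' i : σ, ν (i : I) ^ 2 *
            ‖(Submodule.orthogonalProjection (W (i : I)) f : H)‖ ^ 2)
          = ∑' i : σ, Am * (ν (i : I) ^ 2 *
            ‖(Submodule.orthogonalProjection (W (i : I)) f : H)‖ ^ 2) := tsum_mul_left.symm
        _ ≤ ∑' i : σ, ∑' j : J (i : I),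
            ‖(inner ℂ f ((ν (i : I) : ℂ) • fI (i : I) j) : ℂ)‖ ^ 2 :=
            Summable.tsum_le_tsum (fun i => le_trans (mul_le_mul_of_nonneg_right (min_le_left Af Ag)
              (mul_nonneg (sq_nonneg _) (sq_nonneg _))) (hptF (i : I) f).1)
              (hsFσ.mul_left Am) hsTσ
    have h4 : Am * (∑' i : ↥σᶜ, μ (i : I) ^ 2 *
        ‖(Submodule.orthogonalProjection (V (i : I)) f : H)‖ ^ 2) ≤
        ∑' i : ↥σᶜ, ∑' j : J (i : I),
          ‖(inner ℂ f ((μ (i : I) : ℂ) • gI (i : I) j) : ℂ)‖ ^ 2 := by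
      calc Am * (∑' i : ↥σᶜ, μ (i : I) ^ 2 *
            ‖(Submodule.orthogonalProjection (V (i : I)) f : H)‖ ^ 2)
          = ∑' i : ↥σᶜ, Am * (μ (i : I) ^ 2 *
            ‖(Submodule.orthogonalProjection (V (i : I)) f : H)‖ ^ 2) := tsum_mul_left.symm
        _ ≤ ∑' i : ↥σᶜ, ∑' j : J (i : I),
            ‖(inner ℂ f ((μ (i : I) : ℂ) • gI (i : I) j) : ℂ)‖ ^ 2 :=
            Summable.tsum_le_tsum (fun i => le_trans (mul_le_mul_of_nonneg_right (min_le_right Af Ag)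
              (mul_nonneg (sq_nonneg _) (sq_nonneg _))) (hptG (i : I) f).1)
              (hsGσ.mul_left Am) hsSσ
    obtain ⟨hlow, hup⟩ := h σ f
    constructor
    · rw [div_mul_eq_mul_div, div_le_iff₀ hM0]
      nlinarith [hlow, h1, h2]
    · rw [div_mul_eq_mul_div, le_div_iff₀ hAm0]
      nlinarith [hup, h3, h4]
  · rintro ⟨A, B, hA, hB, h⟩
    have hsF : ∀ f : H, Summable
        (fun i : I => ν i ^ 2 * ‖(Submodule.orthogonalProjection (W i) f : H)‖ ^ 2) := by
      intro f
      refine summable_of_sum_le (c := B * ‖f‖ ^ 2)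
        (fun i => mul_nonneg (sq_nonneg _) (sq_nonneg _)) (fun u => ?_)
      have h1 := (h (↑u) f).2
      rw [Finset.tsum_subtype' u
        (fun i => ν i ^ 2 * ‖(Submodule.orthogonalProjection (W i) f : H)‖ ^ 2)] at h1
      have hnn : (0 : ℝ) ≤ ∑' i : ↥((↑u : Set I)ᶜ),
          μ (i : I) ^ 2 * ‖(Submodule.orthogonalProjection (V (i : I)) f : H)‖ ^ 2 :=
        tsum_nonneg fun i => mul_nonneg (sq_nonneg _) (sq_nonneg _)
      linarith
    have hsG : ∀ f : H, Summable
        (fun i : I => μ i ^ 2 * ‖(Submodule.orthogonalProjection (V i) f : H)‖ ^ 2) := by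
      intro f
      refine summable_of_sum_le (c := B * ‖f‖ ^ 2)
        (fun i => mul_nonneg (sq_nonneg _) (sq_nonneg _)) (fun u => ?_)
      have h1 := (h ((↑u : Set I)ᶜ) f).2
      rw [tsum_subtype_compl_compl (↑u : Set I)
        (fun i => μ i ^ 2 * ‖(Submodule.orthogonalProjection (V i) f : H)‖ ^ 2)] at h1
      rw [Finset.tsum_subtype' u
        (fun i => μ i ^ 2 * ‖(Submodule.orthogonalProjection (V i) f : H)‖ ^ 2)] at h1
      have hnn : (0 : ℝ) ≤ ∑' i : ↥((↑u : Set I)ᶜ),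
          ν (i : I) ^ 2 * ‖(Submodule.orthogonalProjection (W (i : I)) f : H)‖ ^ 2 :=
        tsum_nonneg fun i => mul_nonneg (sq_nonneg _) (sq_nonneg _)
      linarith
    refine ⟨A * Am, B * M, mul_pos hA hAm0, mul_pos hB hM0, fun σ f => ?_⟩
    have hsFσ : Summable (fun i : σ =>
        ν (i : I) ^ 2 * ‖(Submodule.orthogonalProjection (W (i : I)) f : H)‖ ^ 2) :=
      (hsF f).subtype σ
    have hsGσ : Summable (fun i : ↥σᶜ =>
        μ (i : I) ^ 2 * ‖(Submodule.orthogonalProjection (V (i : I)) f : H)‖ ^ 2) :=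
      (hsG f).subtype σᶜ
    have hsTσ : Summable (fun i : σ =>
        ∑' j : J (i : I), ‖(inner ℂ f ((ν (i : I) : ℂ) • fI (i : I) j) : ℂ)‖ ^ 2) :=
      Summable.of_nonneg_of_le (fun i => hTnn _ f) (fun i => (hptF (i : I) f).2)
        (hsFσ.mul_left M)
    have hsSσ : Summable (fun i : ↥σᶜ =>
        ∑' j : J (i : I), ‖(inner ℂ f ((μ (i : I) : ℂ) • gI (i : I) j) : ℂ)‖ ^ 2) :=
      Summable.of_nonneg_of_le (fun i => hSnn _ f) (fun i => (hptG (i : I) f).2)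
        (hsGσ.mul_left M)
    have h1 : (∑' i : σ, ∑' j : J (i : I),
        ‖(inner ℂ f ((ν (i : I) : ℂ) • fI (i : I) j) : ℂ)‖ ^ 2) ≤
        M * ∑' i : σ, ν (i : I) ^ 2 * ‖(Submodule.orthogonalProjection (W (i : I)) f : H)‖ ^ 2 := by
      calc (∑' i : σ, ∑' j : J (i : I),
            ‖(inner ℂ f ((ν (i : I) : ℂ) • fI (i : I) j) : ℂ)‖ ^ 2)
          ≤ ∑' i : σ, M * (ν (i : I) ^ 2 *
            ‖(Submodule.orthogonalProjection (W (i : I)) f : H)‖ ^ 2) :=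
            Summable.tsum_le_tsum (fun i => (hptF (i : I) f).2) hsTσ (hsFσ.mul_left M)
        _ = M * ∑' i : σ, ν (i : I) ^ 2 *
            ‖(Submodule.orthogonalProjection (W (i : I)) f : H)‖ ^ 2 := tsum_mul_left
    have h2 : (∑' i : ↥σᶜ, ∑' j : J (i : I),
        ‖(inner ℂ f ((μ (i : I) : ℂ) • gI (i : I) j) : ℂ)‖ ^ 2) ≤
        M * ∑' i : ↥σᶜ, μ (i : I) ^ 2 * ‖(Submodule.orthogonalProjection (V (i : I)) f : H)‖ ^ 2 := by
      calc (∑' i : ↥σᶜ, ∑' j : J (i : I),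
            ‖(inner ℂ f ((μ (i : I) : ℂ) • gI (i : I) j) : ℂ)‖ ^ 2)
          ≤ ∑' i : ↥σᶜ, M * (μ (i : I) ^ 2 *
            ‖(Submodule.orthogonalProjection (V (i : I)) f : H)‖ ^ 2) :=
            Summable.tsum_le_tsum (fun i => (hptG (i : I) f).2) hsSσ (hsGσ.mul_left M)
        _ = M * ∑' i : ↥σᶜ, μ (i : I) ^ 2 *
            ‖(Submodule.orthogonalProjection (V (i : I)) f : H)‖ ^ 2 := tsum_mul_left
    have h3 : Am * (∑' i : σ, ν (i : I) ^ 2 *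
        ‖(Submodule.orthogonalProjection (W (i : I)) f : H)‖ ^ 2) ≤
        ∑' i : σ, ∑' j : J (i : I),
          ‖(inner ℂ f ((ν (i : I) : ℂ) • fI (i : I) j) : ℂ)‖ ^ 2 := by
      calc Am * (∑' i : σ, ν (i : I) ^ 2 *
            ‖(Submodule.orthogonalProjection (W (i : I)) f : H)‖ ^ 2)
          = ∑' i : σ, Am * (ν (i : I) ^ 2 *
            ‖(Submodule.orthogonalProjection (W (i : I)) f : H)‖ ^ 2) := tsum_mul_left.symm
        _ ≤ ∑' i : σ, ∑' j : J (i : I),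
            ‖(inner ℂ f ((ν (i : I) : ℂ) • fI (i : I) j) : ℂ)‖ ^ 2 :=
            Summable.tsum_le_tsum (fun i => le_trans (mul_le_mul_of_nonneg_right (min_le_left Af Ag)
              (mul_nonneg (sq_nonneg _) (sq_nonneg _))) (hptF (i : I) f).1)
              (hsFσ.mul_left Am) hsTσ
    have h4 : Am * (∑' i : ↥σᶜ, μ (i : I) ^ 2 *
        ‖(Submodule.orthogonalProjection (V (i : I)) f : H)‖ ^ 2) ≤
        ∑' i : ↥σᶜ, ∑' j : J (i : I),
          ‖(inner ℂ f ((μ (i : I) : ℂ) • gI (i : I) j) : ℂ)‖ ^ 2 := by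
      calc Am * (∑' i : ↥σᶜ, μ (i : I) ^ 2 *
            ‖(Submodule.orthogonalProjection (V (i : I)) f : H)‖ ^ 2)
          = ∑' i : ↥σᶜ, Am * (μ (i : I) ^ 2 *
            ‖(Submodule.orthogonalProjection (V (i : I)) f : H)‖ ^ 2) := tsum_mul_left.symm
        _ ≤ ∑' i : ↥σᶜ, ∑' j : J (i : I),
            ‖(inner ℂ f ((μ (i : I) : ℂ) • gI (i : I) j) : ℂ)‖ ^ 2 :=
            Summable.tsum_le_tsum (fun i => le_trans (mul_le_mul_of_nonneg_right (min_le_right Af Ag)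
              (mul_nonneg (sq_nonneg _) (sq_nonneg _))) (hptG (i : I) f).1)
              (hsGσ.mul_left Am) hsSσ
    obtain ⟨hlow, hup⟩ := h σ f
    constructor
    · nlinarith [mul_le_mul_of_nonneg_left hlow hAm0.le, h3, h4]
    · nlinarith [mul_le_mul_of_nonneg_left hup hM0.le, h1, h2]
end

section
/- Let H be a separable complex Hilbert space and let {W_i}_{i∈I} and {V_i}_{i∈I} be fusion frames for H with weights {ν_i} and {μ_i} respectively, which are woven fusion frames with some universal bounds. Let E : H → H be a bounded, self-adjoint, invertible linear operator such that E*E(W_i) ⊆ W_i and E*E(V_i) ⊆ V_i for every i ∈ I. Then the families {E W_i}_{i∈I} and {E V_i}_{i∈I} (each E W_i and E V_i is a closed subspace since E is invertible) are woven fusion frames for H with respect to the weights {ν_i} and {μ_i}. -/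
open ContinuousLinearMap

section Aux

variable {H : Type*} [NormedAddCommGroup H] [InnerProductSpace ℂ H] [CompleteSpace H]

private lemma wff_proj_map_eq (E : H ≃L[ℂ] H)
    (K : Submodule ℂ H) [CompleteSpace K]
    [CompleteSpace (Submodule.map ((E : H →L[ℂ] H) : H →ₗ[ℂ] H) K)]
    (hK : Submodule.map (((adjoint (E : H →L[ℂ] H)) ∘L (E : H →L[ℂ] H)) : H →ₗ[ℂ] H) K ≤ K)
    (f : H) :
    (Submodule.orthogonalProjectionOnto (Submodule.map ((E : H →L[ℂ] H) : H →ₗ[ℂ] H) K) f : H)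
      = E ((Submodule.orthogonalProjectionOnto K (E.symm f) : H)) := by
  set g := E.symm f with hg
  rw [Submodule.coe_orthogonalProjectionOnto_apply]
  apply Submodule.eq_starProjection_of_mem_of_inner_eq_zero
  · exact ⟨_, (Submodule.orthogonalProjectionOnto K g).2, rfl⟩
  · rintro w ⟨u, hu, rfl⟩
    have hfg : f = E g := by simp [hg]
    have hEE : ((adjoint (E : H →L[ℂ] H)) ∘L (E : H →L[ℂ] H)) u ∈ K := hK ⟨u, hu, rfl⟩
    have : inner (𝕜 := ℂ) (f - E ((Submodule.orthogonalProjectionOnto K g : H))) ((E : H →L[ℂ] H) u)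
        = inner (𝕜 := ℂ) (g - (Submodule.orthogonalProjectionOnto K g : H))
            (((adjoint (E : H →L[ℂ] H)) ∘L (E : H →L[ℂ] H)) u) := by
      simp only [coe_comp', Function.comp_apply]
      rw [ContinuousLinearMap.adjoint_inner_right]
      congr 1
      rw [hfg]
      simp [map_sub]
    simp only [ContinuousLinearMap.coe_coe] at this ⊢
    rw [this]
    exact Submodule.starProjection_inner_eq_zero g _ hEE

private lemma wff_summable {I : Type*} (W : I → Submodule ℂ H) [∀ i, CompleteSpace (W i)]
    (ν : I → ℝ) (C : ℝ) (hC : 0 < C)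
    (hW : ∀ f : H, C * ‖f‖ ^ 2 ≤ ∑' i : I, ν i ^ 2 * ‖(Submodule.orthogonalProjectionOnto (W i) f : H)‖ ^ 2)
    (g : H) :
    Summable (fun i => ν i ^ 2 * ‖(Submodule.orthogonalProjectionOnto (W i) g : H)‖ ^ 2) := by
  by_contra hns
  have h0 : ∑' i : I, ν i ^ 2 * ‖(Submodule.orthogonalProjectionOnto (W i) g : H)‖ ^ 2 = 0 :=
    tsum_eq_zero_of_not_summable hns
  have h1 := hW g
  rw [h0] at h1
  have hg : ‖g‖ = 0 := by
    by_contra h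
    have hpos : 0 < ‖g‖ := lt_of_le_of_ne (norm_nonneg g) (Ne.symm h)
    nlinarith [mul_pos hC (pow_pos hpos 2)]
  have hg0 : g = 0 := norm_eq_zero.mp hg
  apply hns
  have : (fun i => ν i ^ 2 * ‖(Submodule.orthogonalProjectionOnto (W i) g : H)‖ ^ 2) = fun _ => (0:ℝ) := by
    funext i; simp [hg0]
  rw [this]
  exact summable_zero

end Aux

/-- Woven fusion frames are preserved by a bounded self-adjoint invertible operator `E`
such that `E*E` leaves each subspace invariant. -/
theorem woven_fusion_frames_map_selfAdjoint_invertible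
    {H : Type*} [NormedAddCommGroup H] [InnerProductSpace ℂ H] [CompleteSpace H]
    [TopologicalSpace.SeparableSpace H]
    {I : Type*} [Countable I]
    (W V : I → Submodule ℂ H) [∀ i, CompleteSpace (W i)] [∀ i, CompleteSpace (V i)]
    (ν μ : I → ℝ) (hν : ∀ i, 0 < ν i) (hμ : ∀ i, 0 < μ i)
    (CW DW CV DV : ℝ) (hCW : 0 < CW) (hDW : 0 < DW) (hCV : 0 < CV) (hDV : 0 < DV)
    (hW : ∀ f : H,
      CW * ‖f‖ ^ 2 ≤ ∑' i : I, ν i ^ 2 * ‖(Submodule.orthogonalProjectionOnto (W i) f : H)‖ ^ 2 ∧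
      ∑' i : I, ν i ^ 2 * ‖(Submodule.orthogonalProjectionOnto (W i) f : H)‖ ^ 2 ≤ DW * ‖f‖ ^ 2)
    (hV : ∀ f : H,
      CV * ‖f‖ ^ 2 ≤ ∑' i : I, μ i ^ 2 * ‖(Submodule.orthogonalProjectionOnto (V i) f : H)‖ ^ 2 ∧
      ∑' i : I, μ i ^ 2 * ‖(Submodule.orthogonalProjectionOnto (V i) f : H)‖ ^ 2 ≤ DV * ‖f‖ ^ 2)
    (A B : ℝ) (hA : 0 < A) (hB : 0 < B)
    (hwoven : ∀ σ : Set I, ∀ f : H,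
      A * ‖f‖ ^ 2 ≤
        (∑' i : σ, ν (i : I) ^ 2 * ‖(Submodule.orthogonalProjectionOnto (W (i : I)) f : H)‖ ^ 2) +
          (∑' i : ↥σᶜ, μ (i : I) ^ 2 * ‖(Submodule.orthogonalProjectionOnto (V (i : I)) f : H)‖ ^ 2) ∧
      (∑' i : σ, ν (i : I) ^ 2 * ‖(Submodule.orthogonalProjectionOnto (W (i : I)) f : H)‖ ^ 2) +
          (∑' i : ↥σᶜ, μ (i : I) ^ 2 * ‖(Submodule.orthogonalProjectionOnto (V (i : I)) f : H)‖ ^ 2) ≤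
        B * ‖f‖ ^ 2)
    (E : H ≃L[ℂ] H) (hEsa : IsSelfAdjoint (E : H →L[ℂ] H))
    (hEEW : ∀ i, Submodule.map
      (((ContinuousLinearMap.adjoint (E : H →L[ℂ] H)) ∘L (E : H →L[ℂ] H)) : H →ₗ[ℂ] H)
      (W i) ≤ W i)
    (hEEV : ∀ i, Submodule.map
      (((ContinuousLinearMap.adjoint (E : H →L[ℂ] H)) ∘L (E : H →L[ℂ] H)) : H →ₗ[ℂ] H)
      (V i) ≤ V i)
    [∀ i, CompleteSpace (Submodule.map ((E : H →L[ℂ] H) : H →ₗ[ℂ] H) (W i))]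
    [∀ i, CompleteSpace (Submodule.map ((E : H →L[ℂ] H) : H →ₗ[ℂ] H) (V i))] :
    ∃ A' B' : ℝ, 0 < A' ∧ 0 < B' ∧ ∀ σ : Set I, ∀ f : H,
      A' * ‖f‖ ^ 2 ≤
        (∑' i : σ, ν (i : I) ^ 2 *
          ‖(Submodule.orthogonalProjectionOnto (Submodule.map ((E : H →L[ℂ] H) : H →ₗ[ℂ] H) (W (i : I))) f : H)‖ ^ 2) +
          (∑' i : ↥σᶜ, μ (i : I) ^ 2 *
            ‖(Submodule.orthogonalProjectionOnto (Submodule.map ((E : H →L[ℂ] H) : H →ₗ[ℂ] H) (V (i : I))) f : H)‖ ^ 2) ∧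
      (∑' i : σ, ν (i : I) ^ 2 *
          ‖(Submodule.orthogonalProjectionOnto (Submodule.map ((E : H →L[ℂ] H) : H →ₗ[ℂ] H) (W (i : I))) f : H)‖ ^ 2) +
          (∑' i : ↥σᶜ, μ (i : I) ^ 2 *
            ‖(Submodule.orthogonalProjectionOnto (Submodule.map ((E : H →L[ℂ] H) : H →ₗ[ℂ] H) (V (i : I))) f : H)‖ ^ 2) ≤
        B' * ‖f‖ ^ 2 := by
  classical
  set c : ℝ := ‖(E : H →L[ℂ] H)‖ + 1 with hcdef
  set d : ℝ := ‖((E.symm : H ≃L[ℂ] H) : H →L[ℂ] H)‖ + 1 with hddef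
  have hc : (1:ℝ) ≤ c := by have := norm_nonneg (E : H →L[ℂ] H); linarith
  have hd : (1:ℝ) ≤ d := by
    have := norm_nonneg ((E.symm : H ≃L[ℂ] H) : H →L[ℂ] H); linarith
  have keyc : ∀ x : H, ‖(E : H →L[ℂ] H) x‖ ≤ c * ‖x‖ := by
    intro x
    refine ((E : H →L[ℂ] H).le_opNorm x).trans ?_
    have := norm_nonneg x
    nlinarith
  have keyd : ∀ x : H, ‖((E.symm : H ≃L[ℂ] H) : H →L[ℂ] H) x‖ ≤ d * ‖x‖ := by
    intro x
    refine (((E.symm : H ≃L[ℂ] H) : H →L[ℂ] H).le_opNorm x).trans ?_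
    have := norm_nonneg x
    nlinarith
  have hpos : (0:ℝ) < c ^ 2 * d ^ 2 := by positivity
  refine ⟨A / (c ^ 2 * d ^ 2), B * (c ^ 2 * d ^ 2), by positivity, by positivity, ?_⟩
  intro σ f
  set g : H := E.symm f with hgdef
  -- the projection identities
  have hWmap : ∀ i, (Submodule.orthogonalProjectionOnto
      (Submodule.map ((E : H →L[ℂ] H) : H →ₗ[ℂ] H) (W i)) f : H)
      = (E : H →L[ℂ] H) ((Submodule.orthogonalProjectionOnto (W i) g : H)) := fun i =>
    wff_proj_map_eq E (W i) (hEEW i) f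
  have hVmap : ∀ i, (Submodule.orthogonalProjectionOnto
      (Submodule.map ((E : H →L[ℂ] H) : H →ₗ[ℂ] H) (V i)) f : H)
      = (E : H →L[ℂ] H) ((Submodule.orthogonalProjectionOnto (V i) g : H)) := fun i =>
    wff_proj_map_eq E (V i) (hEEV i) f
  -- pointwise inequalities
  have hnormc : ∀ x : H, ‖(E : H →L[ℂ] H) x‖ ^ 2 ≤ c ^ 2 * ‖x‖ ^ 2 := by
    intro x
    have h1 := keyc x
    have h2 := norm_nonneg ((E : H →L[ℂ] H) x)
    have h3 := norm_nonneg x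
    nlinarith
  have hnormd : ∀ x : H, ‖x‖ ^ 2 ≤ d ^ 2 * ‖(E : H →L[ℂ] H) x‖ ^ 2 := by
    intro x
    have h1 : ‖x‖ ≤ d * ‖(E : H →L[ℂ] H) x‖ := by
      have h2 := keyd ((E : H →L[ℂ] H) x)
      have h3 : ((E.symm : H ≃L[ℂ] H) : H →L[ℂ] H) ((E : H →L[ℂ] H) x) = x := by
        simp
      rwa [h3] at h2
    have h2 := norm_nonneg ((E : H →L[ℂ] H) x)
    have h3 := norm_nonneg x
    nlinarith
  have hW1 : ∀ i, ν i ^ 2 * ‖(Submodule.orthogonalProjectionOnto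
      (Submodule.map ((E : H →L[ℂ] H) : H →ₗ[ℂ] H) (W i)) f : H)‖ ^ 2
      ≤ c ^ 2 * (ν i ^ 2 * ‖(Submodule.orthogonalProjectionOnto (W i) g : H)‖ ^ 2) := by
    intro i
    rw [hWmap i]
    have := mul_le_mul_of_nonneg_left (hnormc ((Submodule.orthogonalProjectionOnto (W i) g : H)))
      (sq_nonneg (ν i))
    linarith [this, (by ring : ν i ^ 2 * (c ^ 2 * ‖(Submodule.orthogonalProjectionOnto (W i) g : H)‖ ^ 2)
      = c ^ 2 * (ν i ^ 2 * ‖(Submodule.orthogonalProjectionOnto (W i) g : H)‖ ^ 2))]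
  have hV1 : ∀ i, μ i ^ 2 * ‖(Submodule.orthogonalProjectionOnto
      (Submodule.map ((E : H →L[ℂ] H) : H →ₗ[ℂ] H) (V i)) f : H)‖ ^ 2
      ≤ c ^ 2 * (μ i ^ 2 * ‖(Submodule.orthogonalProjectionOnto (V i) g : H)‖ ^ 2) := by
    intro i
    rw [hVmap i]
    have := mul_le_mul_of_nonneg_left (hnormc ((Submodule.orthogonalProjectionOnto (V i) g : H)))
      (sq_nonneg (μ i))
    linarith [this, (by ring : μ i ^ 2 * (c ^ 2 * ‖(Submodule.orthogonalProjectionOnto (V i) g : H)‖ ^ 2)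
      = c ^ 2 * (μ i ^ 2 * ‖(Submodule.orthogonalProjectionOnto (V i) g : H)‖ ^ 2))]
  have hW2 : ∀ i, ν i ^ 2 * ‖(Submodule.orthogonalProjectionOnto (W i) g : H)‖ ^ 2
      ≤ d ^ 2 * (ν i ^ 2 * ‖(Submodule.orthogonalProjectionOnto
        (Submodule.map ((E : H →L[ℂ] H) : H →ₗ[ℂ] H) (W i)) f : H)‖ ^ 2) := by
    intro i
    rw [hWmap i]
    have := mul_le_mul_of_nonneg_left (hnormd ((Submodule.orthogonalProjectionOnto (W i) g : H)))
      (sq_nonneg (ν i))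
    linarith [this, (by ring : ν i ^ 2 * (d ^ 2 *
        ‖(E : H →L[ℂ] H) ((Submodule.orthogonalProjectionOnto (W i) g : H))‖ ^ 2)
      = d ^ 2 * (ν i ^ 2 * ‖(E : H →L[ℂ] H) ((Submodule.orthogonalProjectionOnto (W i) g : H))‖ ^ 2))]
  have hV2 : ∀ i, μ i ^ 2 * ‖(Submodule.orthogonalProjectionOnto (V i) g : H)‖ ^ 2
      ≤ d ^ 2 * (μ i ^ 2 * ‖(Submodule.orthogonalProjectionOnto
        (Submodule.map ((E : H →L[ℂ] H) : H →ₗ[ℂ] H) (V i)) f : H)‖ ^ 2) := by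
    intro i
    rw [hVmap i]
    have := mul_le_mul_of_nonneg_left (hnormd ((Submodule.orthogonalProjectionOnto (V i) g : H)))
      (sq_nonneg (μ i))
    linarith [this, (by ring : μ i ^ 2 * (d ^ 2 *
        ‖(E : H →L[ℂ] H) ((Submodule.orthogonalProjectionOnto (V i) g : H))‖ ^ 2)
      = d ^ 2 * (μ i ^ 2 * ‖(E : H →L[ℂ] H) ((Submodule.orthogonalProjectionOnto (V i) g : H))‖ ^ 2))]
  -- summability
  have hsumW : Summable (fun i => ν i ^ 2 * ‖(Submodule.orthogonalProjectionOnto (W i) g : H)‖ ^ 2) :=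
    wff_summable W ν CW hCW (fun x => (hW x).1) g
  have hsumV : Summable (fun i => μ i ^ 2 * ‖(Submodule.orthogonalProjectionOnto (V i) g : H)‖ ^ 2) :=
    wff_summable V μ CV hCV (fun x => (hV x).1) g
  have hsWσ : Summable (fun i : σ => ν (i:I) ^ 2 * ‖(Submodule.orthogonalProjectionOnto (W i) g : H)‖ ^ 2) :=
    hsumW.subtype σ
  have hsVσ : Summable (fun i : ↥σᶜ => μ (i:I) ^ 2 * ‖(Submodule.orthogonalProjectionOnto (V i) g : H)‖ ^ 2) :=
    hsumV.subtype σᶜ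
  have hsWmσ : Summable (fun i : σ => ν (i:I) ^ 2 * ‖(Submodule.orthogonalProjectionOnto
      (Submodule.map ((E : H →L[ℂ] H) : H →ₗ[ℂ] H) (W i)) f : H)‖ ^ 2) :=
    Summable.of_nonneg_of_le (fun i => by positivity) (fun i => hW1 i) (hsWσ.mul_left (c ^ 2))
  have hsVmσ : Summable (fun i : ↥σᶜ => μ (i:I) ^ 2 * ‖(Submodule.orthogonalProjectionOnto
      (Submodule.map ((E : H →L[ℂ] H) : H →ₗ[ℂ] H) (V i)) f : H)‖ ^ 2) :=
    Summable.of_nonneg_of_le (fun i => by positivity) (fun i => hV1 i) (hsVσ.mul_left (c ^ 2))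
  -- tsum inequalities
  set t1 : ℝ := ∑' i : σ, ν (i:I) ^ 2 * ‖(Submodule.orthogonalProjectionOnto
      (Submodule.map ((E : H →L[ℂ] H) : H →ₗ[ℂ] H) (W (i:I))) f : H)‖ ^ 2 with ht1
  set t2 : ℝ := ∑' i : ↥σᶜ, μ (i:I) ^ 2 * ‖(Submodule.orthogonalProjectionOnto
      (Submodule.map ((E : H →L[ℂ] H) : H →ₗ[ℂ] H) (V (i:I))) f : H)‖ ^ 2 with ht2
  set a : ℝ := ∑' i : σ, ν (i:I) ^ 2 * ‖(Submodule.orthogonalProjectionOnto (W (i:I)) g : H)‖ ^ 2 with ha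
  set b : ℝ := ∑' i : ↥σᶜ, μ (i:I) ^ 2 * ‖(Submodule.orthogonalProjectionOnto (V (i:I)) g : H)‖ ^ 2 with hb
  have tW1 : t1 ≤ c ^ 2 * a := by
    rw [ht1, ha, ← tsum_mul_left]
    exact Summable.tsum_le_tsum (fun i => hW1 i) hsWmσ (hsWσ.mul_left _)
  have tV1 : t2 ≤ c ^ 2 * b := by
    rw [ht2, hb, ← tsum_mul_left]
    exact Summable.tsum_le_tsum (fun i => hV1 i) hsVmσ (hsVσ.mul_left _)
  have tW2 : a ≤ d ^ 2 * t1 := by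
    rw [ht1, ha, ← tsum_mul_left]
    exact Summable.tsum_le_tsum (fun i => hW2 i) hsWσ (hsWmσ.mul_left _)
  have tV2 : b ≤ d ^ 2 * t2 := by
    rw [ht2, hb, ← tsum_mul_left]
    exact Summable.tsum_le_tsum (fun i => hV2 i) hsVσ (hsVmσ.mul_left _)
  obtain ⟨hlow, hup⟩ := hwoven σ g
  have hfg : ‖f‖ ^ 2 ≤ c ^ 2 * ‖g‖ ^ 2 := by
    have h1 : (E : H →L[ℂ] H) g = f := by simp [hgdef]
    have := hnormc g
    rwa [h1] at this
  have hgf : ‖g‖ ^ 2 ≤ d ^ 2 * ‖f‖ ^ 2 := by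
    have h1 := keyd f
    have h2 : ((E.symm : H ≃L[ℂ] H) : H →L[ℂ] H) f = g := rfl
    rw [h2] at h1
    have h3 := norm_nonneg g
    have h4 := norm_nonneg f
    nlinarith
  constructor
  · rw [div_mul_eq_mul_div, div_le_iff₀ hpos]
    have h7 : a + b ≤ d ^ 2 * (t1 + t2) := by
      calc a + b ≤ d ^ 2 * t1 + d ^ 2 * t2 := add_le_add tW2 tV2
        _ = d ^ 2 * (t1 + t2) := by ring
    calc A * ‖f‖ ^ 2 ≤ A * (c ^ 2 * ‖g‖ ^ 2) := mul_le_mul_of_nonneg_left hfg hA.le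
      _ = c ^ 2 * (A * ‖g‖ ^ 2) := by ring
      _ ≤ c ^ 2 * (a + b) := mul_le_mul_of_nonneg_left hlow (by positivity)
      _ ≤ c ^ 2 * (d ^ 2 * (t1 + t2)) := mul_le_mul_of_nonneg_left h7 (by positivity)
      _ = (t1 + t2) * (c ^ 2 * d ^ 2) := by ring
  · calc t1 + t2 ≤ c ^ 2 * a + c ^ 2 * b := add_le_add tW1 tV1
      _ = c ^ 2 * (a + b) := by ring
      _ ≤ c ^ 2 * (B * ‖g‖ ^ 2) := mul_le_mul_of_nonneg_left hup (by positivity)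
      _ ≤ c ^ 2 * (B * (d ^ 2 * ‖f‖ ^ 2)) :=
        mul_le_mul_of_nonneg_left (mul_le_mul_of_nonneg_left hgf hB.le) (by positivity)
      _ = B * (c ^ 2 * d ^ 2) * ‖f‖ ^ 2 := by ring
end

section
/- Let H be a separable complex Hilbert space and let {W_i}_{i∈I} and {V_i}_{i∈I} be fusion frames for H with weights {ν_i} and {μ_i} respectively. Suppose that for every pair of disjoint finite subsets I₀, J₀ ⊆ I and every ε > 0 there exist disjoint subsets σ, δ ⊆ I ∖ (I₀ ∪ J₀) with σ ∪ δ = I ∖ (I₀ ∪ J₀) such that some unit vector f ∈ H satisfies Σ_{i∈I₀∪σ} ν_i² ‖P_{W_i} f‖² + Σ_{i∈J₀∪δ} μ_i² ‖P_{V_i} f‖² < ε. Then there exists a subset M ⊆ I such that the weaving {W_i}_{i∈M} ∪ {V_i}_{i∈Mᶜ} has no positive lower fusion frame bound, i.e., inf over unit vectors f ∈ H of Σ_{i∈M} ν_i² ‖P_{W_i} f‖² + Σ_{i∈Mᶜ} μ_i² ‖P_{V_i} f‖² equals 0. In particular, {W_i}_{i∈I} and {V_i}_{i∈I} are not woven fusion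 frames. -/
open Set Filter

lemma indicator_union_le_aux {α : Type*} {f : α → ℝ} (hf : ∀ x, 0 ≤ f x)
    {s t u : Set α} (h : s ⊆ t ∪ u) (x : α) :
    s.indicator f x ≤ t.indicator f x + u.indicator f x := by
  by_cases hx : x ∈ s
  · rw [Set.indicator_of_mem hx]
    rcases h hx with h1 | h1
    · rw [Set.indicator_of_mem h1]
      exact le_add_of_nonneg_right (Set.indicator_nonneg (fun y _ => hf y) x)
    · rw [Set.indicator_of_mem h1]
      exact le_add_of_nonneg_left (Set.indicator_nonneg (fun y _ => hf y) x)
  · rw [Set.indicator_of_notMem hx]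
    exact add_nonneg (Set.indicator_nonneg (fun y _ => hf y) x)
      (Set.indicator_nonneg (fun y _ => hf y) x)

lemma tsum_subtype_le_union {α : Type*} {f : α → ℝ} (hf : ∀ x, 0 ≤ f x) (hsum : Summable f)
    {s t u : Set α} (h : s ⊆ t ∪ u) :
    (∑' x : s, f x) ≤ (∑' x : t, f x) + (∑' x : u, f x) := by
  rw [tsum_subtype, tsum_subtype, tsum_subtype,
    ← Summable.tsum_add (hsum.indicator t) (hsum.indicator u)]
  exact Summable.tsum_le_tsum (indicator_union_le_aux hf h) (hsum.indicator s)
    ((hsum.indicator t).add (hsum.indicator u))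

/-- If arbitrarily small lower weaving bounds occur relative to any pair of disjoint finite
index sets, then some weaving has lower fusion frame bound zero; in particular the two
fusion frames are not woven fusion frames. -/
theorem not_woven_of_small_lower_bounds
    {H : Type*} [NormedAddCommGroup H] [InnerProductSpace ℂ H] [CompleteSpace H]
    [TopologicalSpace.SeparableSpace H]
    {I : Type*} [Countable I]
    (W V : I → Submodule ℂ H) [∀ i, CompleteSpace (W i)] [∀ i, CompleteSpace (V i)]
    (ν μ : I → ℝ) (hν : ∀ i, 0 < ν i) (hμ : ∀ i, 0 < μ i)
    (CW DW CV DV : ℝ) (hCW : 0 < CW) (hDW : 0 < DW) (hCV : 0 < CV) (hDV : 0 < DV)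
    (hW : ∀ f : H,
      CW * ‖f‖ ^ 2 ≤ ∑' i : I, ν i ^ 2 * ‖(Submodule.orthogonalProjectionOnto (W i) f : H)‖ ^ 2 ∧
      ∑' i : I, ν i ^ 2 * ‖(Submodule.orthogonalProjectionOnto (W i) f : H)‖ ^ 2 ≤ DW * ‖f‖ ^ 2)
    (hV : ∀ f : H,
      CV * ‖f‖ ^ 2 ≤ ∑' i : I, μ i ^ 2 * ‖(Submodule.orthogonalProjectionOnto (V i) f : H)‖ ^ 2 ∧
      ∑' i : I, μ i ^ 2 * ‖(Submodule.orthogonalProjectionOnto (V i) f : H)‖ ^ 2 ≤ DV * ‖f‖ ^ 2)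
    (hsmall : ∀ I₀ J₀ : Finset I, Disjoint I₀ J₀ → ∀ ε : ℝ, 0 < ε →
      ∃ σ δ : Set I, Disjoint σ δ ∧ σ ∪ δ = ((I₀ : Set I) ∪ (J₀ : Set I))ᶜ ∧
        ∃ f : H, ‖f‖ = 1 ∧
          (∑' i : ((I₀ : Set I) ∪ σ : Set I),
              ν (i : I) ^ 2 * ‖(Submodule.orthogonalProjectionOnto (W (i : I)) f : H)‖ ^ 2) +
            (∑' i : ((J₀ : Set I) ∪ δ : Set I),
              μ (i : I) ^ 2 * ‖(Submodule.orthogonalProjectionOnto (V (i : I)) f : H)‖ ^ 2) < ε) :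
    (∃ M : Set I,
      (⨅ f : {g : H // ‖g‖ = 1},
        (∑' i : M, ν (i : I) ^ 2 * ‖(Submodule.orthogonalProjectionOnto (W (i : I)) (f : H) : H)‖ ^ 2) +
          (∑' i : ↥Mᶜ, μ (i : I) ^ 2 * ‖(Submodule.orthogonalProjectionOnto (V (i : I)) (f : H) : H)‖ ^ 2)) = 0) ∧
    ¬ (∃ A B : ℝ, 0 < A ∧ 0 < B ∧ ∀ σ : Set I, ∀ f : H,
      A * ‖f‖ ^ 2 ≤
        (∑' i : σ, ν (i : I) ^ 2 * ‖(Submodule.orthogonalProjectionOnto (W (i : I)) f : H)‖ ^ 2) +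
          (∑' i : ↥σᶜ, μ (i : I) ^ 2 * ‖(Submodule.orthogonalProjectionOnto (V (i : I)) f : H)‖ ^ 2) ∧
      (∑' i : σ, ν (i : I) ^ 2 * ‖(Submodule.orthogonalProjectionOnto (W (i : I)) f : H)‖ ^ 2) +
          (∑' i : ↥σᶜ, μ (i : I) ^ 2 * ‖(Submodule.orthogonalProjectionOnto (V (i : I)) f : H)‖ ^ 2) ≤
        B * ‖f‖ ^ 2) := by
  classical
  let a : H → I → ℝ := fun f i => ν i ^ 2 * ‖(Submodule.orthogonalProjectionOnto (W i) f : H)‖ ^ 2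
  let b : H → I → ℝ := fun f i => μ i ^ 2 * ‖(Submodule.orthogonalProjectionOnto (V i) f : H)‖ ^ 2
  have ha0 : ∀ f i, 0 ≤ a f i := fun f i => by positivity
  have hb0 : ∀ f i, 0 ≤ b f i := fun f i => by positivity
  have hsa : ∀ f : H, ‖f‖ = 1 → Summable (a f) := by
    intro f hf
    by_contra hns
    have h0 : (∑' i : I, ν i ^ 2 * ‖(Submodule.orthogonalProjectionOnto (W i) f : H)‖ ^ 2) = 0 :=
      tsum_eq_zero_of_not_summable hns
    have h1 := (hW f).1
    rw [h0, hf] at h1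
    nlinarith
  have hsb : ∀ f : H, ‖f‖ = 1 → Summable (b f) := by
    intro f hf
    by_contra hns
    have h0 : (∑' i : I, μ i ^ 2 * ‖(Submodule.orthogonalProjectionOnto (V i) f : H)‖ ^ 2) = 0 :=
      tsum_eq_zero_of_not_summable hns
    have h1 := (hV f).1
    rw [h0, hf] at h1
    nlinarith
  -- key step lemma
  have key : ∀ (A₀ B₀ : Finset I), Disjoint A₀ B₀ → ∀ ε : ℝ, 0 < ε →
      ∃ A' B' : Finset I, A₀ ⊆ A' ∧ B₀ ⊆ B' ∧ Disjoint A' B' ∧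
        ∃ f : H, ‖f‖ = 1 ∧ ∀ M : Set I, ↑A' ⊆ M → Disjoint M (↑B' : Set I) →
          (∑' i : M, a f ↑i) + (∑' i : ↥Mᶜ, b f ↑i) < ε := by
    intro A₀ B₀ hAB ε hε
    obtain ⟨σ, δ, hσδ, hcov, f, hf1, hlt⟩ := hsmall A₀ B₀ hAB (ε/3) (by linarith)
    have hsaf := hsa f hf1
    have hsbf := hsb f hf1
    have hsum_ab : Summable (fun i => a f i + b f i) := hsaf.add hsbf
    have htail := tendsto_tsum_compl_atTop_zero (fun i => a f i + b f i)
    obtain ⟨F, hF⟩ := (htail.eventually (gt_mem_nhds (by linarith : (0:ℝ) < ε/3))).exists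
    -- convert to set-complement indexing
    have hFc : (∑' i : ((↑F : Set I)ᶜ : Set I), (a f ↑i + b f ↑i)) < ε/3 := by
      have he := (Equiv.subtypeEquivRight (p := fun x => x ∈ ((↑F : Set I)ᶜ : Set I))
        (q := fun x : I => x ∉ F) (fun x => by simp)).tsum_eq
        (fun i : {x : I // x ∉ F} => a f ↑i + b f ↑i)
      calc (∑' i : ((↑F : Set I)ᶜ : Set I), (a f ↑i + b f ↑i))
          = ∑' i : {x : I // x ∉ F}, (a f ↑i + b f ↑i) := he
        _ < ε/3 := hF
    have hsplit : (∑' i : ((↑F : Set I)ᶜ : Set I), (a f ↑i + b f ↑i))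
        = (∑' i : ((↑F : Set I)ᶜ : Set I), a f ↑i)
          + (∑' i : ((↑F : Set I)ᶜ : Set I), b f ↑i) :=
      Summable.tsum_add (hsaf.subtype _) (hsbf.subtype _)
    have hσc : σ ⊆ ((↑A₀ : Set I) ∪ ↑B₀)ᶜ := hcov ▸ Set.subset_union_left
    have hδc : δ ⊆ ((↑A₀ : Set I) ∪ ↑B₀)ᶜ := hcov ▸ Set.subset_union_right
    refine ⟨A₀ ∪ F.filter (· ∈ σ), B₀ ∪ F.filter (· ∈ δ), Finset.subset_union_left,
      Finset.subset_union_left, ?_, f, hf1, ?_⟩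
    · rw [Finset.disjoint_left]
      intro x hx hx'
      rcases Finset.mem_union.mp hx with h1 | h1
      · rcases Finset.mem_union.mp hx' with h2 | h2
        · exact Finset.disjoint_left.mp hAB h1 h2
        · exact hδc (Finset.mem_filter.mp h2).2 (Or.inl (Finset.mem_coe.mpr h1))
      · have hxσ := (Finset.mem_filter.mp h1).2
        rcases Finset.mem_union.mp hx' with h2 | h2
        · exact hσc hxσ (Or.inr (Finset.mem_coe.mpr h2))
        · exact (Set.disjoint_left.mp hσδ hxσ) (Finset.mem_filter.mp h2).2
    · intro M hA'M hMB'
      have hM1 : M ⊆ ((↑A₀ : Set I) ∪ σ) ∪ ((↑F : Set I)ᶜ) := by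
        intro x hx
        by_cases hxAB : x ∈ ((↑A₀ : Set I) ∪ ↑B₀)
        · rcases hxAB with h1 | h1
          · exact Or.inl (Or.inl h1)
          · exfalso
            have hxB' : x ∈ ((↑(B₀ ∪ F.filter (· ∈ δ)) : Set I)) :=
              Finset.mem_coe.mpr (Finset.mem_union.mpr (Or.inl (Finset.mem_coe.mp h1)))
            exact Set.disjoint_left.mp hMB' hx hxB'
        · have hx2 : x ∈ σ ∪ δ := hcov ▸ hxAB
          rcases hx2 with h1 | h1
          · exact Or.inl (Or.inr h1)
          · refine Or.inr ?_
            intro hxF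
            have hxB' : x ∈ ((↑(B₀ ∪ F.filter (· ∈ δ)) : Set I)) :=
              Finset.mem_coe.mpr (Finset.mem_union.mpr
                (Or.inr (Finset.mem_filter.mpr ⟨Finset.mem_coe.mp hxF, h1⟩)))
            exact Set.disjoint_left.mp hMB' hx hxB'
      have hM2 : Mᶜ ⊆ ((↑B₀ : Set I) ∪ δ) ∪ ((↑F : Set I)ᶜ) := by
        intro x hx
        by_cases hxAB : x ∈ ((↑A₀ : Set I) ∪ ↑B₀)
        · rcases hxAB with h1 | h1
          · exfalso
            exact hx (hA'M (Finset.mem_coe.mpr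
              (Finset.mem_union.mpr (Or.inl (Finset.mem_coe.mp h1)))))
          · exact Or.inl (Or.inl h1)
        · have hx2 : x ∈ σ ∪ δ := hcov ▸ hxAB
          rcases hx2 with h1 | h1
          · refine Or.inr ?_
            intro hxF
            exact hx (hA'M (Finset.mem_coe.mpr (Finset.mem_union.mpr
              (Or.inr (Finset.mem_filter.mpr ⟨Finset.mem_coe.mp hxF, h1⟩)))))
          · exact Or.inl (Or.inr h1)
      have e1 : (∑' i : M, a f ↑i)
          ≤ (∑' i : ((↑A₀ : Set I) ∪ σ : Set I), a f ↑i)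
            + (∑' i : ((↑F : Set I)ᶜ : Set I), a f ↑i) :=
        tsum_subtype_le_union (ha0 f) hsaf hM1
      have e2 : (∑' i : ↥Mᶜ, b f ↑i)
          ≤ (∑' i : ((↑B₀ : Set I) ∪ δ : Set I), b f ↑i)
            + (∑' i : ((↑F : Set I)ᶜ : Set I), b f ↑i) :=
        tsum_subtype_le_union (hb0 f) hsbf hM2
      have hlt' : (∑' i : ((↑A₀ : Set I) ∪ σ : Set I), a f ↑i)
          + (∑' i : ((↑B₀ : Set I) ∪ δ : Set I), b f ↑i) < ε/3 := hlt
      linarith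
  -- recursive construction
  have exstep : ∀ (n : ℕ) (p : {p : Finset I × Finset I // Disjoint p.1 p.2}),
      ∃ q : {p : Finset I × Finset I // Disjoint p.1 p.2},
        p.1.1 ⊆ q.1.1 ∧ p.1.2 ⊆ q.1.2 ∧
        ∃ f : H, ‖f‖ = 1 ∧ ∀ M : Set I, ↑q.1.1 ⊆ M → Disjoint M (↑q.1.2 : Set I) →
          (∑' i : M, a f ↑i) + (∑' i : ↥Mᶜ, b f ↑i) < 1/((n:ℝ)+1) := by
    intro n p
    obtain ⟨A', B', h1, h2, h3, f, hf, hb⟩ := key p.1.1 p.1.2 p.2 (1/((n:ℝ)+1)) (by positivity)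
    exact ⟨⟨(A', B'), h3⟩, h1, h2, f, hf, hb⟩
  let seq : ℕ → {p : Finset I × Finset I // Disjoint p.1 p.2} :=
    fun n => Nat.rec ⟨(∅, ∅), by simp⟩ (fun k p => (exstep k p).choose) n
  have hseq : ∀ n, seq (n+1) = (exstep n (seq n)).choose := fun n => rfl
  have mono1 : ∀ m n, m ≤ n → ((seq m).1.1 : Finset I) ⊆ (seq n).1.1 := by
    intro m n h
    induction n with
    | zero =>
      have : m = 0 := Nat.le_zero.mp h
      subst this; exact subset_rfl
    | succ k ih =>
      rcases Nat.lt_or_ge m (k+1) with h' | h'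
      · exact (ih (Nat.lt_succ_iff.mp h')).trans ((exstep k (seq k)).choose_spec.1)
      · have : m = k + 1 := le_antisymm h h'
        subst this; exact subset_rfl
  have mono2 : ∀ m n, m ≤ n → ((seq m).1.2 : Finset I) ⊆ (seq n).1.2 := by
    intro m n h
    induction n with
    | zero =>
      have : m = 0 := Nat.le_zero.mp h
      subst this; exact subset_rfl
    | succ k ih =>
      rcases Nat.lt_or_ge m (k+1) with h' | h'
      · exact (ih (Nat.lt_succ_iff.mp h')).trans ((exstep k (seq k)).choose_spec.2.1)
      · have : m = k + 1 := le_antisymm h h'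
        subst this; exact subset_rfl
  set M : Set I := ⋃ n, ((seq n).1.1 : Set I) with hMdef
  have hMsub : ∀ n, ((seq n).1.1 : Set I) ⊆ M := by
    intro n; rw [hMdef]; exact Set.subset_iUnion (fun k => (((seq k).1.1 : Finset I) : Set I)) n
  have hMdis : ∀ n, Disjoint M ((seq n).1.2 : Set I) := by
    intro n
    rw [Set.disjoint_left]
    rintro x hx hx'
    rw [hMdef] at hx
    obtain ⟨k, hk⟩ := Set.mem_iUnion.mp hx
    rcases le_total k n with h | h
    · exact Finset.disjoint_left.mp (seq n).2 (mono1 k n h (Finset.mem_coe.mp hk))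
        (Finset.mem_coe.mp hx')
    · exact Finset.disjoint_left.mp (seq k).2 (Finset.mem_coe.mp hk)
        (mono2 n k h (Finset.mem_coe.mp hx'))
  have hmain : ∀ n : ℕ, ∃ f : H, ‖f‖ = 1 ∧
      (∑' i : M, a f ↑i) + (∑' i : ↥Mᶜ, b f ↑i) < 1/((n:ℝ)+1) := by
    intro n
    obtain ⟨hA, hB, f, hf, hb⟩ := (exstep n (seq n)).choose_spec
    exact ⟨f, hf, hb M (hMsub (n+1)) (hMdis (n+1))⟩
  obtain ⟨f₀, hf₀, _⟩ := hmain 0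
  haveI : Nonempty {g : H // ‖g‖ = 1} := ⟨⟨f₀, hf₀⟩⟩
  have hbdd : BddBelow (Set.range fun f : {g : H // ‖g‖ = 1} =>
      (∑' i : M, a ↑f ↑i) + (∑' i : ↥Mᶜ, b ↑f ↑i)) := by
    refine ⟨0, ?_⟩
    rintro y ⟨x, rfl⟩
    exact add_nonneg (tsum_nonneg fun i => ha0 _ _) (tsum_nonneg fun i => hb0 _ _)
  constructor
  · refine ⟨M, le_antisymm ?_ ?_⟩
    · show (⨅ f : {g : H // ‖g‖ = 1},
        (∑' i : M, a ↑f ↑i) + (∑' i : ↥Mᶜ, b ↑f ↑i)) ≤ 0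
      by_contra hcon
      push_neg at hcon
      obtain ⟨n, hn⟩ := exists_nat_one_div_lt hcon
      obtain ⟨f, hf, hlt⟩ := hmain n
      have hle := ciInf_le hbdd (⟨f, hf⟩ : {g : H // ‖g‖ = 1})
      have h2 : (⨅ f : {g : H // ‖g‖ = 1},
          (∑' i : M, a ↑f ↑i) + (∑' i : ↥Mᶜ, b ↑f ↑i)) < 1/((n:ℝ)+1) :=
        lt_of_le_of_lt hle hlt
      linarith
    · show (0:ℝ) ≤ ⨅ f : {g : H // ‖g‖ = 1},
        (∑' i : M, a ↑f ↑i) + (∑' i : ↥Mᶜ, b ↑f ↑i)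
      exact le_ciInf fun x =>
        add_nonneg (tsum_nonneg fun i => ha0 _ _) (tsum_nonneg fun i => hb0 _ _)
  · rintro ⟨A, B, hA, hB, hq⟩
    obtain ⟨n, hn⟩ := exists_nat_one_div_lt hA
    obtain ⟨f, hf, hlt⟩ := hmain n
    have h1 : A * ‖f‖ ^ 2 ≤ (∑' i : M, a f ↑i) + (∑' i : ↥Mᶜ, b f ↑i) := (hq M f).1
    rw [hf] at h1
    nlinarith
end

section
/- Let H be a separable complex Hilbert space and let {W_i}_{i∈I} and {V_i}_{i∈I} be fusion frames for H with weights {ν_i} and {μ_i} which are woven fusion frames with some universal bounds A, B > 0. Let B₁ = sup_{‖f‖=1} Σ_{i∈I} ν_i² ‖P_{W_i} f‖² and B₂ = sup_{‖f‖=1} Σ_{i∈I} μ_i² ‖P_{V_i} f‖² be the optimal upper fusion frame bounds of the two families. Then B₁ + B₂ is not the optimal universal upper woven bound; that is, sup over all subsets σ ⊆ I and all unit vectors f ∈ H of Σ_{i∈σ} ν_i² ‖P_{W_i} f‖² + Σ_{i∈σᶜ} μ_i² ‖P_{V_i} f‖² is strictly less than B₁ + B₂. -/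
/-- If two fusion frames with optimal upper bounds `B₁` and `B₂` are woven fusion frames,
then `B₁ + B₂` is not the optimal universal upper woven bound. -/
theorem sum_of_optimal_upper_bounds_not_optimal_woven_bound
    {H : Type*} [NormedAddCommGroup H] [InnerProductSpace ℂ H] [CompleteSpace H]
    [TopologicalSpace.SeparableSpace H]
    {I : Type*} [Countable I]
    (W V : I → Submodule ℂ H) [∀ i, CompleteSpace (W i)] [∀ i, CompleteSpace (V i)]
    (ν μ : I → ℝ) (hν : ∀ i, 0 < ν i) (hμ : ∀ i, 0 < μ i)
    (CW CV : ℝ) (hCW : 0 < CW) (hCV : 0 < CV)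
    (hWlow : ∀ f : H,
      CW * ‖f‖ ^ 2 ≤ ∑' i : I, ν i ^ 2 * ‖(Submodule.orthogonalProjection (W i) f : H)‖ ^ 2)
    (hVlow : ∀ f : H,
      CV * ‖f‖ ^ 2 ≤ ∑' i : I, μ i ^ 2 * ‖(Submodule.orthogonalProjection (V i) f : H)‖ ^ 2)
    (B₁ B₂ : ℝ)
    (hB₁ : IsLUB {r : ℝ | ∃ f : H, ‖f‖ = 1 ∧
      r = ∑' i : I, ν i ^ 2 * ‖(Submodule.orthogonalProjection (W i) f : H)‖ ^ 2} B₁)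
    (hB₂ : IsLUB {r : ℝ | ∃ f : H, ‖f‖ = 1 ∧
      r = ∑' i : I, μ i ^ 2 * ‖(Submodule.orthogonalProjection (V i) f : H)‖ ^ 2} B₂)
    (A B : ℝ) (hA : 0 < A) (hB : 0 < B)
    (hwoven : ∀ σ : Set I, ∀ f : H,
      A * ‖f‖ ^ 2 ≤
        (∑' i : σ, ν (i : I) ^ 2 * ‖(Submodule.orthogonalProjection (W (i : I)) f : H)‖ ^ 2) +
          (∑' i : ↥σᶜ, μ (i : I) ^ 2 * ‖(Submodule.orthogonalProjection (V (i : I)) f : H)‖ ^ 2) ∧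
      (∑' i : σ, ν (i : I) ^ 2 * ‖(Submodule.orthogonalProjection (W (i : I)) f : H)‖ ^ 2) +
          (∑' i : ↥σᶜ, μ (i : I) ^ 2 * ‖(Submodule.orthogonalProjection (V (i : I)) f : H)‖ ^ 2) ≤
        B * ‖f‖ ^ 2) :
    sSup {r : ℝ | ∃ (σ : Set I) (f : H), ‖f‖ = 1 ∧
      r = (∑' i : σ, ν (i : I) ^ 2 * ‖(Submodule.orthogonalProjection (W (i : I)) f : H)‖ ^ 2) +
        (∑' i : ↥σᶜ, μ (i : I) ^ 2 * ‖(Submodule.orthogonalProjection (V (i : I)) f : H)‖ ^ 2)}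
      < B₁ + B₂ := by
  classical
  -- abbreviations
  set SW := {r : ℝ | ∃ f : H, ‖f‖ = 1 ∧
      r = ∑' i : I, ν i ^ 2 * ‖(Submodule.orthogonalProjection (W i) f : H)‖ ^ 2} with hSW
  -- SW is nonempty, so there is a unit vector
  have hne : SW.Nonempty := by
    by_contra h
    rw [Set.not_nonempty_iff_eq_empty] at h
    have h1 := hB₁.2 (by rw [h]; intro x _; exact (Set.notMem_empty x ‹x ∈ (∅:Set ℝ)›).elim
      : B₁ - 1 ∈ upperBounds SW)
    linarith
  obtain ⟨r₀, f₀, hf₀, -⟩ := hne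
  -- summability
  have hsumW : ∀ f : H, ‖f‖ = 1 →
      Summable (fun i : I => ν i ^ 2 * ‖(Submodule.orthogonalProjection (W i) f : H)‖ ^ 2) := by
    intro f hf
    by_contra h
    have := hWlow f
    rw [tsum_eq_zero_of_not_summable h, hf] at this
    nlinarith
  have hsumV : ∀ f : H, ‖f‖ = 1 →
      Summable (fun i : I => μ i ^ 2 * ‖(Submodule.orthogonalProjection (V i) f : H)‖ ^ 2) := by
    intro f hf
    by_contra h
    have := hVlow f
    rw [tsum_eq_zero_of_not_summable h, hf] at this
    nlinarith
  have hub : ∀ r ∈ {r : ℝ | ∃ (σ : Set I) (f : H), ‖f‖ = 1 ∧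
      r = (∑' i : σ, ν (i : I) ^ 2 * ‖(Submodule.orthogonalProjection (W (i : I)) f : H)‖ ^ 2) +
        (∑' i : ↥σᶜ, μ (i : I) ^ 2 * ‖(Submodule.orthogonalProjection (V (i : I)) f : H)‖ ^ 2)},
      r ≤ B₁ + B₂ - A := by
    rintro r ⟨σ, f, hf, rfl⟩
    have hW := hsumW f hf
    have hV := hsumV f hf
    have h1 := hW.tsum_subtype_add_tsum_subtype_compl σ
    have h2 := hV.tsum_subtype_add_tsum_subtype_compl σᶜ
    rw [compl_compl] at h2
    have hfull1 : (∑' i : I, ν i ^ 2 * ‖(Submodule.orthogonalProjection (W i) f : H)‖ ^ 2) ≤ B₁ :=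
      hB₁.1 ⟨f, hf, rfl⟩
    have hfull2 : (∑' i : I, μ i ^ 2 * ‖(Submodule.orthogonalProjection (V i) f : H)‖ ^ 2) ≤ B₂ :=
      hB₂.1 ⟨f, hf, rfl⟩
    have hlow := (hwoven σᶜ f).1
    rw [compl_compl, hf] at hlow
    linarith
  have hne2 : {r : ℝ | ∃ (σ : Set I) (f : H), ‖f‖ = 1 ∧
      r = (∑' i : σ, ν (i : I) ^ 2 * ‖(Submodule.orthogonalProjection (W (i : I)) f : H)‖ ^ 2) +
        (∑' i : ↥σᶜ, μ (i : I) ^ 2 * ‖(Submodule.orthogonalProjection (V (i : I)) f : H)‖ ^ 2)}.Nonempty :=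
    ⟨_, ∅, f₀, hf₀, rfl⟩
  have := csSup_le hne2 hub
  linarith
end

section
/- Let H be a separable complex Hilbert space, let J ⊆ I, and let {W_i}_{i∈I} and {V_i}_{i∈I} be fusion frames for H with weights {ν_i} and {μ_i} and with upper fusion frame bounds B_W and B_V respectively. If the subfamilies {W_i}_{i∈J} and {V_i}_{i∈J} are woven fusion frames with universal lower bound A > 0 (i.e., for every τ ⊆ J and f ∈ H, A‖f‖² ≤ Σ_{i∈τ} ν_i² ‖P_{W_i} f‖² + Σ_{i∈J∖τ} μ_i² ‖P_{V_i} f‖²), then {W_i}_{i∈I} and {V_i}_{i∈I} are woven fusion frames for H with universal bounds A and B_W + B_V. -/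
lemma tsum_subtype_mono' {I : Type*} {g : I → ℝ} (hg : ∀ i, 0 ≤ g i) (hsum : Summable g)
    {s t : Set I} (hst : s ⊆ t) : ∑' i : s, g i ≤ ∑' i : t, g i := by
  rw [tsum_subtype, tsum_subtype]
  refine Summable.tsum_le_tsum (fun i => ?_) (hsum.indicator s) (hsum.indicator t)
  exact Set.indicator_le_indicator_of_subset hst hg i

lemma tsum_subtype_le_total {I : Type*} {g : I → ℝ} (hg : ∀ i, 0 ≤ g i) (hsum : Summable g)
    (s : Set I) : ∑' i : s, g i ≤ ∑' i, g i := by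
  calc ∑' i : s, g i ≤ ∑' i : (Set.univ : Set I), g i :=
        tsum_subtype_mono' hg hsum (Set.subset_univ s)
    _ = ∑' i, g i := tsum_univ g

/-- If the subfamilies over `J ⊆ I` of two fusion frames are woven with universal lower
bound `A`, then the full families over `I` are woven fusion frames with universal bounds
`A` and `B_W + B_V`. -/
theorem woven_fusion_frames_of_woven_subfamily
    {H : Type*} [NormedAddCommGroup H] [InnerProductSpace ℂ H] [CompleteSpace H]
    [TopologicalSpace.SeparableSpace H]
    {I : Type*} [Countable I] (J : Set I)
    (W V : I → Submodule ℂ H) [∀ i, CompleteSpace (W i)] [∀ i, CompleteSpace (V i)]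
    (ν μ : I → ℝ) (hν : ∀ i, 0 < ν i) (hμ : ∀ i, 0 < μ i)
    (CW BW CV BV : ℝ) (hCW : 0 < CW) (hBW : 0 < BW) (hCV : 0 < CV) (hBV : 0 < BV)
    (hW : ∀ f : H,
      CW * ‖f‖ ^ 2 ≤ ∑' i : I, ν i ^ 2 * ‖(Submodule.orthogonalProjection (W i) f : H)‖ ^ 2 ∧
      ∑' i : I, ν i ^ 2 * ‖(Submodule.orthogonalProjection (W i) f : H)‖ ^ 2 ≤ BW * ‖f‖ ^ 2)
    (hV : ∀ f : H,
      CV * ‖f‖ ^ 2 ≤ ∑' i : I, μ i ^ 2 * ‖(Submodule.orthogonalProjection (V i) f : H)‖ ^ 2 ∧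
      ∑' i : I, μ i ^ 2 * ‖(Submodule.orthogonalProjection (V i) f : H)‖ ^ 2 ≤ BV * ‖f‖ ^ 2)
    (A : ℝ) (hA : 0 < A)
    (hwovenJ : ∀ τ : Set I, τ ⊆ J → ∀ f : H,
      A * ‖f‖ ^ 2 ≤
        (∑' i : τ, ν (i : I) ^ 2 * ‖(Submodule.orthogonalProjection (W (i : I)) f : H)‖ ^ 2) +
          (∑' i : (J \ τ : Set I), μ (i : I) ^ 2 * ‖(Submodule.orthogonalProjection (V (i : I)) f : H)‖ ^ 2)) :
    ∀ σ : Set I, ∀ f : H,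
      A * ‖f‖ ^ 2 ≤
        (∑' i : σ, ν (i : I) ^ 2 * ‖(Submodule.orthogonalProjection (W (i : I)) f : H)‖ ^ 2) +
          (∑' i : ↥σᶜ, μ (i : I) ^ 2 * ‖(Submodule.orthogonalProjection (V (i : I)) f : H)‖ ^ 2) ∧
      (∑' i : σ, ν (i : I) ^ 2 * ‖(Submodule.orthogonalProjection (W (i : I)) f : H)‖ ^ 2) +
          (∑' i : ↥σᶜ, μ (i : I) ^ 2 * ‖(Submodule.orthogonalProjection (V (i : I)) f : H)‖ ^ 2) ≤
        (BW + BV) * ‖f‖ ^ 2 := by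
  intro σ f
  set gW : I → ℝ := fun i => ν i ^ 2 * ‖(Submodule.orthogonalProjection (W i) f : H)‖ ^ 2 with hgW
  set gV : I → ℝ := fun i => μ i ^ 2 * ‖(Submodule.orthogonalProjection (V i) f : H)‖ ^ 2 with hgV
  have hgWnn : ∀ i, 0 ≤ gW i := fun i => mul_nonneg (sq_nonneg _) (sq_nonneg _)
  have hgVnn : ∀ i, 0 ≤ gV i := fun i => mul_nonneg (sq_nonneg _) (sq_nonneg _)
  by_cases hf : f = 0
  · subst hf
    have hW0 : ∀ i, gW i = 0 := by
      intro i; simp [hgW]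
    have hV0 : ∀ i, gV i = 0 := by
      intro i; simp [hgV]
    simp only [hgW, hgV] at hW0 hV0
    constructor
    · simp [hW0, hV0, tsum_congr (fun i : σ => hW0 i), tsum_congr (fun i : ↥σᶜ => hV0 i)]
    · simp [hW0, hV0]
  · have hfpos : 0 < ‖f‖ ^ 2 := pow_pos (norm_pos_iff.mpr hf) 2
    have hsW : Summable gW := by
      by_contra h
      have := (hW f).1
      rw [tsum_eq_zero_of_not_summable h] at this
      nlinarith
    have hsV : Summable gV := by
      by_contra h
      have := (hV f).1
      rw [tsum_eq_zero_of_not_summable h] at this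
      nlinarith
    constructor
    · have key := hwovenJ (σ ∩ J) Set.inter_subset_right f
      have h1 : (∑' i : (σ ∩ J : Set I), gW i) ≤ ∑' i : σ, gW i :=
        tsum_subtype_mono' hgWnn hsW Set.inter_subset_left
      have h2 : (∑' i : (J \ (σ ∩ J) : Set I), gV i) ≤ ∑' i : ↥σᶜ, gV i := by
        refine tsum_subtype_mono' hgVnn hsV ?_
        intro x hx
        simp only [Set.mem_diff, Set.mem_inter_iff] at hx
        simp only [Set.mem_compl_iff]
        tauto
      calc A * ‖f‖ ^ 2 ≤ _ := key
        _ ≤ _ := add_le_add h1 h2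
    · have h1 : (∑' i : σ, gW i) ≤ BW * ‖f‖ ^ 2 :=
        le_trans (tsum_subtype_le_total hgWnn hsW σ) (hW f).2
      have h2 : (∑' i : ↥σᶜ, gV i) ≤ BV * ‖f‖ ^ 2 :=
        le_trans (tsum_subtype_le_total hgVnn hsV σᶜ) (hV f).2
      linarith
end

section
/- Let H be a separable complex Hilbert space and let {W_i}_{i∈I} and {V_i}_{i∈I} be woven fusion frames for H with weights {ν_i} and {μ_i} and universal bounds A, B > 0. Suppose J ⊆ I and there is a constant D with 0 < D < A such that Σ_{i∈J} ν_i² ‖P_{W_i} f‖² ≤ D‖f‖² for every f ∈ H. Then {W_i}_{i∈I∖J} and {V_i}_{i∈I∖J} are woven fusion frames for H with universal bounds A − D and B (i.e., for every σ ⊆ I∖J and f ∈ H, (A−D)‖f‖² ≤ Σ_{i∈σ} ν_i² ‖P_{W_i} f‖² + Σ_{i∈(I∖J)∖σ} μ_i² ‖P_{V_i} f‖² ≤ B‖f‖²), and moreover each of {W_i}_{i∈I∖J} and {V_i}_{i∈I∖J} is a fusion frame for H with lower bound A − D. -/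
/-- Deleting a subfamily whose weighted projections are bounded by `D < A` from woven
fusion frames leaves woven fusion frames with universal bounds `A - D` and `B`, and each
remaining family is itself a fusion frame with lower bound `A - D`. -/
theorem woven_fusion_frames_delete_small_subfamily
    {H : Type*} [NormedAddCommGroup H] [InnerProductSpace ℂ H] [CompleteSpace H]
    [TopologicalSpace.SeparableSpace H]
    {I : Type*} [Countable I]
    (W V : I → Submodule ℂ H) [∀ i, CompleteSpace (W i)] [∀ i, CompleteSpace (V i)]
    (ν μ : I → ℝ) (hν : ∀ i, 0 < ν i) (hμ : ∀ i, 0 < μ i)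
    (A B : ℝ) (hA : 0 < A) (hB : 0 < B)
    (hwoven : ∀ σ : Set I, ∀ f : H,
      A * ‖f‖ ^ 2 ≤
        (∑' i : σ, ν (i : I) ^ 2 * ‖(Submodule.orthogonalProjection (W (i : I)) f : H)‖ ^ 2) +
          (∑' i : ↥σᶜ, μ (i : I) ^ 2 * ‖(Submodule.orthogonalProjection (V (i : I)) f : H)‖ ^ 2) ∧
      (∑' i : σ, ν (i : I) ^ 2 * ‖(Submodule.orthogonalProjection (W (i : I)) f : H)‖ ^ 2) +
          (∑' i : ↥σᶜ, μ (i : I) ^ 2 * ‖(Submodule.orthogonalProjection (V (i : I)) f : H)‖ ^ 2) ≤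
        B * ‖f‖ ^ 2)
    (J : Set I) (D : ℝ) (hD0 : 0 < D) (hDA : D < A)
    (hJ : ∀ f : H,
      (∑' i : J, ν (i : I) ^ 2 * ‖(Submodule.orthogonalProjection (W (i : I)) f : H)‖ ^ 2) ≤ D * ‖f‖ ^ 2) :
    (∀ σ : Set I, σ ⊆ Jᶜ → ∀ f : H,
      (A - D) * ‖f‖ ^ 2 ≤
        (∑' i : σ, ν (i : I) ^ 2 * ‖(Submodule.orthogonalProjection (W (i : I)) f : H)‖ ^ 2) +
          (∑' i : (Jᶜ \ σ : Set I), μ (i : I) ^ 2 * ‖(Submodule.orthogonalProjection (V (i : I)) f : H)‖ ^ 2) ∧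
      (∑' i : σ, ν (i : I) ^ 2 * ‖(Submodule.orthogonalProjection (W (i : I)) f : H)‖ ^ 2) +
          (∑' i : (Jᶜ \ σ : Set I), μ (i : I) ^ 2 * ‖(Submodule.orthogonalProjection (V (i : I)) f : H)‖ ^ 2) ≤
        B * ‖f‖ ^ 2) ∧
    (∀ f : H, (A - D) * ‖f‖ ^ 2 ≤
      ∑' i : (Jᶜ : Set I), ν (i : I) ^ 2 * ‖(Submodule.orthogonalProjection (W (i : I)) f : H)‖ ^ 2) ∧
    (∀ f : H, (A - D) * ‖f‖ ^ 2 ≤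
      ∑' i : (Jᶜ : Set I), μ (i : I) ^ 2 * ‖(Submodule.orthogonalProjection (V (i : I)) f : H)‖ ^ 2) := by

  have hWnn : ∀ (f : H) (i : I),
      0 ≤ ν i ^ 2 * ‖(Submodule.orthogonalProjection (W i) f : H)‖ ^ 2 := by
    intro f i; positivity
  have hVnn : ∀ (f : H) (i : I),
      0 ≤ μ i ^ 2 * ‖(Submodule.orthogonalProjection (V i) f : H)‖ ^ 2 := by
    intro f i; positivity
  have hsumW : ∀ f : H,
      Summable (fun i : I => ν i ^ 2 * ‖(Submodule.orthogonalProjection (W i) f : H)‖ ^ 2) := by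
    intro f
    by_cases hf : f = 0
    · subst hf
      simp only [map_zero, ZeroMemClass.coe_zero, norm_zero]
      simpa using summable_zero
    · by_contra hns
      have h1 := (hwoven Set.univ f).1
      have h2 : (∑' i : ↥(Set.univ : Set I)ᶜ,
          μ (i : I) ^ 2 * ‖(Submodule.orthogonalProjection (V (i : I)) f : H)‖ ^ 2) = 0 := by
        rw [Set.compl_univ]; exact tsum_empty
      have h3 : (∑' i : (Set.univ : Set I),
          ν (i : I) ^ 2 * ‖(Submodule.orthogonalProjection (W (i : I)) f : H)‖ ^ 2) = 0 := by
        exact tsum_eq_zero_of_not_summable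
          (fun hs => hns (((Equiv.Set.univ I).summable_iff).mp hs))
      rw [h2, h3] at h1
      have hfn : 0 < ‖f‖ := norm_pos_iff.mpr hf
      have h4 : 0 < A * ‖f‖ ^ 2 := mul_pos hA (pow_pos hfn 2)
      linarith
  have hsumV : ∀ f : H,
      Summable (fun i : I => μ i ^ 2 * ‖(Submodule.orthogonalProjection (V i) f : H)‖ ^ 2) := by
    intro f
    by_cases hf : f = 0
    · subst hf
      simp only [map_zero, ZeroMemClass.coe_zero, norm_zero]
      simpa using summable_zero
    · by_contra hns
      have h1 := (hwoven ∅ f).1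
      have h2 : (∑' i : (∅ : Set I),
          ν (i : I) ^ 2 * ‖(Submodule.orthogonalProjection (W (i : I)) f : H)‖ ^ 2) = 0 := tsum_empty
      have h3 : (∑' i : ↥(∅ : Set I)ᶜ,
          μ (i : I) ^ 2 * ‖(Submodule.orthogonalProjection (V (i : I)) f : H)‖ ^ 2) = 0 := by
        rw [Set.compl_empty]
        exact tsum_eq_zero_of_not_summable
          (fun hs => hns (((Equiv.Set.univ I).summable_iff).mp hs))
      rw [h2, h3] at h1
      have hfn : 0 < ‖f‖ := norm_pos_iff.mpr hf
      have h4 : 0 < A * ‖f‖ ^ 2 := mul_pos hA (pow_pos hfn 2)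
      linarith
  have main : ∀ σ : Set I, σ ⊆ Jᶜ → ∀ f : H,
      (A - D) * ‖f‖ ^ 2 ≤
        (∑' i : σ, ν (i : I) ^ 2 * ‖(Submodule.orthogonalProjection (W (i : I)) f : H)‖ ^ 2) +
          (∑' i : (Jᶜ \ σ : Set I), μ (i : I) ^ 2 * ‖(Submodule.orthogonalProjection (V (i : I)) f : H)‖ ^ 2) ∧
      (∑' i : σ, ν (i : I) ^ 2 * ‖(Submodule.orthogonalProjection (W (i : I)) f : H)‖ ^ 2) +
          (∑' i : (Jᶜ \ σ : Set I), μ (i : I) ^ 2 * ‖(Submodule.orthogonalProjection (V (i : I)) f : H)‖ ^ 2) ≤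
        B * ‖f‖ ^ 2 := by
    intro σ hσ f
    have hdisj : Disjoint σ J := Set.disjoint_left.mpr fun i hi => hσ hi
    have hsplit : (∑' i : ↥(σ ∪ J),
        ν (i : I) ^ 2 * ‖(Submodule.orthogonalProjection (W (i : I)) f : H)‖ ^ 2) =
        (∑' i : σ, ν (i : I) ^ 2 * ‖(Submodule.orthogonalProjection (W (i : I)) f : H)‖ ^ 2) +
        (∑' i : J, ν (i : I) ^ 2 * ‖(Submodule.orthogonalProjection (W (i : I)) f : H)‖ ^ 2) :=
      Summable.tsum_union_disjoint hdisj ((hsumW f).subtype σ) ((hsumW f).subtype J)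
    have hcompl : (σ ∪ J)ᶜ = Jᶜ \ σ := by
      ext i
      simp only [Set.mem_compl_iff, Set.mem_union, Set.mem_diff]
      tauto
    have h := hwoven (σ ∪ J) f
    rw [hcompl, hsplit] at h
    have hJf := hJ f
    have hσnn : (0:ℝ) ≤ ∑' i : σ,
        ν (i : I) ^ 2 * ‖(Submodule.orthogonalProjection (W (i : I)) f : H)‖ ^ 2 :=
      tsum_nonneg fun i => hWnn f i
    have hJnn : (0:ℝ) ≤ ∑' i : J,
        ν (i : I) ^ 2 * ‖(Submodule.orthogonalProjection (W (i : I)) f : H)‖ ^ 2 :=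
      tsum_nonneg fun i => hWnn f i
    exact ⟨by linarith [h.1], by linarith [h.2]⟩
  refine ⟨main, fun f => ?_, fun f => ?_⟩
  · have h := (main Jᶜ (subset_refl _) f).1
    have h2 : (Jᶜ \ Jᶜ : Set I) = ∅ := Set.diff_self
    rw [h2] at h
    have h3 : (∑' i : (∅ : Set I),
        μ (i : I) ^ 2 * ‖(Submodule.orthogonalProjection (V (i : I)) f : H)‖ ^ 2) = 0 := tsum_empty
    rw [h3, add_zero] at h
    exact h
  · have h := (main ∅ (Set.empty_subset _) f).1
    have h2 : (Jᶜ \ ∅ : Set I) = Jᶜ := Set.diff_empty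
    rw [h2] at h
    have h3 : (∑' i : (∅ : Set I),
        ν (i : I) ^ 2 * ‖(Submodule.orthogonalProjection (W (i : I)) f : H)‖ ^ 2) = 0 := tsum_empty
    rw [h3, zero_add] at h
    exact h
end

section
/- Let H be a separable complex Hilbert space and let {W_i}_{i∈I} and {V_i}_{i∈I} be fusion frames for H with weights {ν_i} and {μ_i} and fusion frame bounds (A_W, B_W) and (A_V, B_V) respectively. Define the bounded operators T_W, T_V : ℓ²(I, H) → H by T_W({h_i}) = Σ_{i∈I} ν_i P_{W_i} h_i and T_V({h_i}) = Σ_{i∈I} μ_i P_{V_i} h_i. Suppose there exist constants 0 < λ₁, λ₂, μ < 1 such that (2/A_W)·(√B_W + √B_V)·(λ₁√B_W + λ₂√B_V + μ) ≤ 1 and ‖T_W h − T_V h‖ ≤ λ₁‖T_W h‖ + λ₂‖T_V h‖ + μ‖h‖ for every h ∈ ℓ²(I, H). Then {W_i}_{i∈I} and {V_i}_{i∈I} are woven fusion frames for H with universal bounds A_W/2 and B_W + B_V. -/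
open scoped ComplexOrder ENNReal NNReal

local notation "⟪" x ", " y "⟫" => @inner ℂ _ _ x y

private lemma real_inner_smul_left' {H : Type*} [NormedAddCommGroup H]
    [InnerProductSpace ℂ H] (r : ℝ) (x y : H) :
    ⟪r • x, y⟫ = (r : ℂ) * ⟪x, y⟫ := by
  rw [show r • x = (r : ℂ) • x from rfl, inner_smul_left, Complex.conj_ofReal]

private lemma real_inner_smul_right' {H : Type*} [NormedAddCommGroup H]
    [InnerProductSpace ℂ H] (r : ℝ) (x y : H) :
    ⟪x, r • y⟫ = (r : ℂ) * ⟪x, y⟫ := by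
  rw [show r • y = (r : ℂ) • y from rfl, inner_smul_right]

private lemma inner_orthogonalProjection_left_eq_right {H : Type*} [NormedAddCommGroup H]
    [InnerProductSpace ℂ H] (K : Submodule ℂ H) [K.HasOrthogonalProjection] (u v : H) :
    ⟪(Submodule.orthogonalProjection K u : H), v⟫ = ⟪u, (Submodule.orthogonalProjection K v : H)⟫ :=
  K.inner_starProjection_left_eq_right u v

/-- Cauchy–Schwarz for finite sums, square-root form. -/
private lemma cs_sqrt {κ : Type*} (G : Finset κ) (u v : κ → ℝ)
    (h : 0 ≤ ∑ i ∈ G, u i * v i) :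
    ∑ i ∈ G, u i * v i ≤
      Real.sqrt (∑ i ∈ G, u i ^ 2) * Real.sqrt (∑ i ∈ G, v i ^ 2) := by
  rw [← Real.sqrt_mul (by positivity)]
  rw [Real.le_sqrt h (by positivity)]
  exact Finset.sum_mul_sq_le_sq_mul_sq G u v

private lemma minkowski_sqrt {κ : Type*} (G : Finset κ) (u v : κ → ℝ)
    (hu : ∀ i, 0 ≤ u i) (hv : ∀ i, 0 ≤ v i) :
    Real.sqrt (∑ i ∈ G, (u i + v i) ^ 2) ≤
      Real.sqrt (∑ i ∈ G, u i ^ 2) + Real.sqrt (∑ i ∈ G, v i ^ 2) := by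
  have hcs : ∑ i ∈ G, u i * v i ≤
      Real.sqrt (∑ i ∈ G, u i ^ 2) * Real.sqrt (∑ i ∈ G, v i ^ 2) :=
    cs_sqrt G u v (Finset.sum_nonneg fun i _ => mul_nonneg (hu i) (hv i))
  have h1 : ∑ i ∈ G, (u i + v i) ^ 2 ≤
      (Real.sqrt (∑ i ∈ G, u i ^ 2) + Real.sqrt (∑ i ∈ G, v i ^ 2)) ^ 2 := by
    have e1 : ∑ i ∈ G, (u i + v i) ^ 2
        = ∑ i ∈ G, u i ^ 2 + 2 * ∑ i ∈ G, u i * v i + ∑ i ∈ G, v i ^ 2 := by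
      simp only [← Finset.sum_add_distrib, Finset.mul_sum]
      exact Finset.sum_congr rfl fun i _ => by ring
    have e2 : Real.sqrt (∑ i ∈ G, u i ^ 2) ^ 2 = ∑ i ∈ G, u i ^ 2 :=
      Real.sq_sqrt (by positivity)
    have e3 : Real.sqrt (∑ i ∈ G, v i ^ 2) ^ 2 = ∑ i ∈ G, v i ^ 2 :=
      Real.sq_sqrt (by positivity)
    nlinarith [e1, e2, e3, hcs]
  calc Real.sqrt (∑ i ∈ G, (u i + v i) ^ 2)
      ≤ Real.sqrt ((Real.sqrt (∑ i ∈ G, u i ^ 2) + Real.sqrt (∑ i ∈ G, v i ^ 2)) ^ 2) :=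
        Real.sqrt_le_sqrt h1
    _ = _ := Real.sqrt_sq (by positivity)

/-- If the fusion-frame lower bound holds at `g`, the frame series at `g` is summable. -/
private lemma aux_summable {H : Type*} [NormedAddCommGroup H] [InnerProductSpace ℂ H]
    {I : Type*} (U : I → Submodule ℂ H) [∀ i, CompleteSpace (U i)] (w : I → ℝ)
    {A : ℝ} (hA : 0 < A) (g : H)
    (hlow : A * ‖g‖ ^ 2 ≤ ∑' i : I, w i ^ 2 * ‖(Submodule.orthogonalProjection (U i) g : H)‖ ^ 2) :
    Summable (fun i => w i ^ 2 * ‖(Submodule.orthogonalProjection (U i) g : H)‖ ^ 2) := by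
  by_cases hs : Summable (fun i => w i ^ 2 * ‖(Submodule.orthogonalProjection (U i) g : H)‖ ^ 2)
  · exact hs
  · rw [tsum_eq_zero_of_not_summable hs] at hlow
    have hg : g = 0 := by
      by_contra hne
      have hn : 0 < ‖g‖ := norm_pos_iff.mpr hne
      nlinarith [mul_pos hA (mul_pos hn hn)]
    subst hg
    exact absurd (by simpa using (summable_zero :
      Summable (fun _ : I => (0 : ℝ)))) hs

/-- Norm bound for a finite synthesis sum. -/
private lemma aux_synth {H : Type*} [NormedAddCommGroup H] [InnerProductSpace ℂ H]
    {I : Type*} (U : I → Submodule ℂ H) [∀ i, CompleteSpace (U i)] (w : I → ℝ)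
    (hw : ∀ i, 0 ≤ w i) {B : ℝ} (hB : 0 < B)
    (hsum : ∀ g : H, Summable (fun i => w i ^ 2 * ‖(Submodule.orthogonalProjection (U i) g : H)‖ ^ 2))
    (hub : ∀ g : H, ∑' i : I, w i ^ 2 * ‖(Submodule.orthogonalProjection (U i) g : H)‖ ^ 2 ≤ B * ‖g‖ ^ 2)
    (F : Finset I) (y : I → H) :
    ‖∑ i ∈ F, w i • (Submodule.orthogonalProjection (U i) (y i) : H)‖ ≤
      Real.sqrt B * Real.sqrt (∑ i ∈ F, ‖y i‖ ^ 2) := by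
  set g : H := ∑ i ∈ F, w i • (Submodule.orthogonalProjection (U i) (y i) : H) with hgdef
  by_cases hg0 : g = 0
  · rw [hg0, norm_zero]; positivity
  have hgn : 0 < ‖g‖ := norm_pos_iff.mpr hg0
  have key : ‖g‖ ^ 2 ≤ Real.sqrt (∑ i ∈ F, ‖y i‖ ^ 2) * (Real.sqrt B * ‖g‖) := by
    have h1 : (‖g‖ : ℝ) ^ 2 = RCLike.re ⟪g, g⟫ := (inner_self_eq_norm_sq g).symm
    have h2 : ⟪g, g⟫ =
        ∑ i ∈ F, (w i : ℂ) * ⟪y i, (Submodule.orthogonalProjection (U i) g : H)⟫ := by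
      conv_lhs => rw [hgdef]
      rw [sum_inner]
      exact Finset.sum_congr rfl fun i _ => by
        rw [real_inner_smul_left', inner_orthogonalProjection_left_eq_right]
    have h3 : ‖g‖ ^ 2 =
        ∑ i ∈ F, w i * RCLike.re ⟪y i, (Submodule.orthogonalProjection (U i) g : H)⟫ := by
      rw [h1, h2, map_sum]
      exact Finset.sum_congr rfl fun i _ => RCLike.re_ofReal_mul _ _
    have h4 : ‖g‖ ^ 2 ≤
        ∑ i ∈ F, ‖y i‖ * (w i * ‖(Submodule.orthogonalProjection (U i) g : H)‖) := by
      rw [h3]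
      refine Finset.sum_le_sum fun i _ => ?_
      have := re_inner_le_norm (𝕜 := ℂ) (y i) (Submodule.orthogonalProjection (U i) g : H)
      calc w i * RCLike.re ⟪y i, (Submodule.orthogonalProjection (U i) g : H)⟫
          ≤ w i * (‖y i‖ * ‖(Submodule.orthogonalProjection (U i) g : H)‖) :=
            mul_le_mul_of_nonneg_left this (hw i)
        _ = ‖y i‖ * (w i * ‖(Submodule.orthogonalProjection (U i) g : H)‖) := by ring
    have h5 : ∑ i ∈ F, ‖y i‖ * (w i * ‖(Submodule.orthogonalProjection (U i) g : H)‖) ≤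
        Real.sqrt (∑ i ∈ F, ‖y i‖ ^ 2) *
          Real.sqrt (∑ i ∈ F, (w i * ‖(Submodule.orthogonalProjection (U i) g : H)‖) ^ 2) := by
      refine cs_sqrt F _ _ ?_
      exact Finset.sum_nonneg fun i _ =>
        mul_nonneg (norm_nonneg _) (mul_nonneg (hw i) (norm_nonneg _))
    have h6 : ∑ i ∈ F, (w i * ‖(Submodule.orthogonalProjection (U i) g : H)‖) ^ 2 ≤ B * ‖g‖ ^ 2 := by
      have : ∀ i ∈ F, (w i * ‖(Submodule.orthogonalProjection (U i) g : H)‖) ^ 2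
          = w i ^ 2 * ‖(Submodule.orthogonalProjection (U i) g : H)‖ ^ 2 := fun i _ => by ring
      rw [Finset.sum_congr rfl this]
      exact le_trans (Summable.sum_le_tsum F (fun i _ => by positivity) (hsum g)) (hub g)
    have h7 : Real.sqrt (∑ i ∈ F, (w i * ‖(Submodule.orthogonalProjection (U i) g : H)‖) ^ 2)
        ≤ Real.sqrt B * ‖g‖ := by
      refine le_trans (Real.sqrt_le_sqrt h6) ?_
      rw [Real.sqrt_mul hB.le, Real.sqrt_sq (norm_nonneg _)]
    calc ‖g‖ ^ 2 ≤ _ := le_trans h4 h5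
      _ ≤ Real.sqrt (∑ i ∈ F, ‖y i‖ ^ 2) * (Real.sqrt B * ‖g‖) :=
        mul_le_mul_of_nonneg_left h7 (Real.sqrt_nonneg _)
  nlinarith [key, hgn, Real.sqrt_nonneg B, Real.sqrt_nonneg (∑ i ∈ F, ‖y i‖ ^ 2)]

set_option maxHeartbeats 1000000 in
/-- Paley–Wiener type perturbation: if the synthesis-type operators of two fusion frames
are close, the fusion frames are woven fusion frames with universal bounds `A_W/2` and
`B_W + B_V`. -/
theorem woven_fusion_frames_of_synthesis_perturbation
    {H : Type*} [NormedAddCommGroup H] [InnerProductSpace ℂ H] [CompleteSpace H]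
    [TopologicalSpace.SeparableSpace H]
    {I : Type*} [Countable I]
    (W V : I → Submodule ℂ H) [∀ i, CompleteSpace (W i)] [∀ i, CompleteSpace (V i)]
    (ν μ : I → ℝ) (hν : ∀ i, 0 < ν i) (hμ : ∀ i, 0 < μ i)
    (AW BW AV BV : ℝ) (hAW : 0 < AW) (hBW : 0 < BW) (hAV : 0 < AV) (hBV : 0 < BV)
    (hW : ∀ f : H,
      AW * ‖f‖ ^ 2 ≤ ∑' i : I, ν i ^ 2 * ‖(Submodule.orthogonalProjection (W i) f : H)‖ ^ 2 ∧
      ∑' i : I, ν i ^ 2 * ‖(Submodule.orthogonalProjection (W i) f : H)‖ ^ 2 ≤ BW * ‖f‖ ^ 2)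
    (hV : ∀ f : H,
      AV * ‖f‖ ^ 2 ≤ ∑' i : I, μ i ^ 2 * ‖(Submodule.orthogonalProjection (V i) f : H)‖ ^ 2 ∧
      ∑' i : I, μ i ^ 2 * ‖(Submodule.orthogonalProjection (V i) f : H)‖ ^ 2 ≤ BV * ‖f‖ ^ 2)
    (TW TV : lp (fun _ : I => H) 2 →L[ℂ] H)
    (hTW : ∀ h : lp (fun _ : I => H) 2,
      TW h = ∑' i : I, ν i • (Submodule.orthogonalProjection (W i) (h i) : H))
    (hTV : ∀ h : lp (fun _ : I => H) 2,
      TV h = ∑' i : I, μ i • (Submodule.orthogonalProjection (V i) (h i) : H))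
    (lam₁ lam₂ mu : ℝ)
    (hlam₁ : 0 < lam₁) (hlam₁' : lam₁ < 1) (hlam₂ : 0 < lam₂) (hlam₂' : lam₂ < 1)
    (hmu : 0 < mu) (hmu' : mu < 1)
    (hmain : (2 / AW) * (Real.sqrt BW + Real.sqrt BV) *
      (lam₁ * Real.sqrt BW + lam₂ * Real.sqrt BV + mu) ≤ 1)
    (hpert : ∀ h : lp (fun _ : I => H) 2,
      ‖TW h - TV h‖ ≤ lam₁ * ‖TW h‖ + lam₂ * ‖TV h‖ + mu * ‖h‖) :
    ∀ σ : Set I, ∀ f : H,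
      (AW / 2) * ‖f‖ ^ 2 ≤
        (∑' i : σ, ν (i : I) ^ 2 * ‖(Submodule.orthogonalProjection (W (i : I)) f : H)‖ ^ 2) +
          (∑' i : ↥σᶜ, μ (i : I) ^ 2 * ‖(Submodule.orthogonalProjection (V (i : I)) f : H)‖ ^ 2) ∧
      (∑' i : σ, ν (i : I) ^ 2 * ‖(Submodule.orthogonalProjection (W (i : I)) f : H)‖ ^ 2) +
          (∑' i : ↥σᶜ, μ (i : I) ^ 2 * ‖(Submodule.orthogonalProjection (V (i : I)) f : H)‖ ^ 2) ≤
        (BW + BV) * ‖f‖ ^ 2 := by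
  intro σ f
  classical
  have hsW : ∀ g : H,
      Summable (fun i => ν i ^ 2 * ‖(Submodule.orthogonalProjection (W i) g : H)‖ ^ 2) :=
    fun g => aux_summable W ν hAW g (hW g).1
  have hsV : ∀ g : H,
      Summable (fun i => μ i ^ 2 * ‖(Submodule.orthogonalProjection (V i) g : H)‖ ^ 2) :=
    fun g => aux_summable V μ hAV g (hV g).1
  have hsplitA : (∑' i : σ, ν (i : I) ^ 2 * ‖(Submodule.orthogonalProjection (W (i : I)) f : H)‖ ^ 2)
      + (∑' i : ↥σᶜ, ν (i : I) ^ 2 * ‖(Submodule.orthogonalProjection (W (i : I)) f : H)‖ ^ 2)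
      = ∑' i : I, ν i ^ 2 * ‖(Submodule.orthogonalProjection (W i) f : H)‖ ^ 2 :=
    Summable.tsum_add_tsum_compl ((hsW f).subtype σ) ((hsW f).subtype σᶜ)
  have hsplitB : (∑' i : σ, μ (i : I) ^ 2 * ‖(Submodule.orthogonalProjection (V (i : I)) f : H)‖ ^ 2)
      + (∑' i : ↥σᶜ, μ (i : I) ^ 2 * ‖(Submodule.orthogonalProjection (V (i : I)) f : H)‖ ^ 2)
      = ∑' i : I, μ i ^ 2 * ‖(Submodule.orthogonalProjection (V i) f : H)‖ ^ 2 :=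
    Summable.tsum_add_tsum_compl ((hsV f).subtype σ) ((hsV f).subtype σᶜ)
  have hnnAc : 0 ≤ ∑' i : ↥σᶜ, ν (i : I) ^ 2 * ‖(Submodule.orthogonalProjection (W (i : I)) f : H)‖ ^ 2 :=
    tsum_nonneg fun i => by positivity
  have hnnB : 0 ≤ ∑' i : σ, μ (i : I) ^ 2 * ‖(Submodule.orthogonalProjection (V (i : I)) f : H)‖ ^ 2 :=
    tsum_nonneg fun i => by positivity
  constructor
  · -- lower bound
    set ε := lam₁ * Real.sqrt BW + lam₂ * Real.sqrt BV + mu with hε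
    have hεpos : 0 < ε := by
      have := Real.sqrt_nonneg BW
      have := Real.sqrt_nonneg BV
      nlinarith [mul_nonneg hlam₁.le (Real.sqrt_nonneg BW),
        mul_nonneg hlam₂.le (Real.sqrt_nonneg BV)]
    set x : I → H := fun i => ν i • (Submodule.orthogonalProjection (W i) f : H)
      - μ i • (Submodule.orthogonalProjection (V i) f : H) with hx
    have key : ∀ F : Finset I, ∑ i ∈ F, ‖x i‖ ^ 2 ≤ (ε * ‖f‖) ^ 2 := by
      intro F
      set h : lp (fun _ : I => H) 2 := ∑ i ∈ F, lp.single 2 i (x i) with hh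
      have happ : ∀ j, h j = if j ∈ F then x j else 0 := by
        intro j
        simp only [hh, lp.coeFn_sum, Finset.sum_apply, lp.single_apply, Pi.single_apply, Finset.sum_ite_eq, Finset.sum_dite_eq]
      have hTWh : TW h = ∑ i ∈ F, ν i • (Submodule.orthogonalProjection (W i) (x i) : H) := by
        rw [hTW h, tsum_eq_sum (s := F) (fun j hj => by rw [happ j, if_neg hj]; simp)]
        exact Finset.sum_congr rfl fun i hi => by rw [happ i, if_pos hi]
      have hTVh : TV h = ∑ i ∈ F, μ i • (Submodule.orthogonalProjection (V i) (x i) : H) := by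
        rw [hTV h, tsum_eq_sum (s := F) (fun j hj => by rw [happ j, if_neg hj]; simp)]
        exact Finset.sum_congr rfl fun i hi => by rw [happ i, if_pos hi]
      have hSnn : (0:ℝ) ≤ ∑ i ∈ F, ‖x i‖ ^ 2 := Finset.sum_nonneg fun i _ => sq_nonneg _
      have hnh : ‖h‖ = Real.sqrt (∑ i ∈ F, ‖x i‖ ^ 2) := by
        have h2 := lp.norm_sum_single (p := 2) (E := fun _ : I => H) (by norm_num) x F
        rw [show ((2:ℝ≥0∞)).toReal = ((2:ℕ):ℝ) by norm_num] at h2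
        simp only [Real.rpow_natCast] at h2
        rw [← hh] at h2
        rw [← h2, Real.sqrt_sq (norm_nonneg _)]
      have hTWb : ‖TW h‖ ≤ Real.sqrt BW * Real.sqrt (∑ i ∈ F, ‖x i‖ ^ 2) := by
        rw [hTWh]
        exact aux_synth W ν (fun i => (hν i).le) hBW hsW (fun g => (hW g).2) F x
      have hTVb : ‖TV h‖ ≤ Real.sqrt BV * Real.sqrt (∑ i ∈ F, ‖x i‖ ^ 2) := by
        rw [hTVh]
        exact aux_synth V μ (fun i => (hμ i).le) hBV hsV (fun g => (hV g).2) F x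
      have hinner : (∑ i ∈ F, ‖x i‖ ^ 2) = RCLike.re ⟪TW h - TV h, f⟫ := by
        rw [hTWh, hTVh, ← Finset.sum_sub_distrib, sum_inner, map_sum]
        refine Finset.sum_congr rfl fun i _ => ?_
        have hterm : ⟪ν i • (Submodule.orthogonalProjection (W i) (x i) : H)
            - μ i • (Submodule.orthogonalProjection (V i) (x i) : H), f⟫ = ⟪x i, x i⟫ := by
          rw [inner_sub_left, real_inner_smul_left', real_inner_smul_left',
            inner_orthogonalProjection_left_eq_right, inner_orthogonalProjection_left_eq_right,
            ← real_inner_smul_right', ← real_inner_smul_right', ← inner_sub_right]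
        rw [hterm, inner_self_eq_norm_sq]
      have h1 : (∑ i ∈ F, ‖x i‖ ^ 2) ≤ ‖TW h - TV h‖ * ‖f‖ := by
        rw [hinner]
        exact le_trans (RCLike.re_le_norm _) (norm_inner_le_norm _ _)
      have h3 : lam₁ * ‖TW h‖ + lam₂ * ‖TV h‖ + mu * ‖h‖
          ≤ ε * Real.sqrt (∑ i ∈ F, ‖x i‖ ^ 2) := by
        rw [hnh]
        have e1 := mul_le_mul_of_nonneg_left hTWb hlam₁.le
        have e2 := mul_le_mul_of_nonneg_left hTVb hlam₂.le
        rw [hε]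
        nlinarith [e1, e2]
      have hle : (∑ i ∈ F, ‖x i‖ ^ 2) ≤ ε * Real.sqrt (∑ i ∈ F, ‖x i‖ ^ 2) * ‖f‖ :=
        calc (∑ i ∈ F, ‖x i‖ ^ 2) ≤ ‖TW h - TV h‖ * ‖f‖ := h1
          _ ≤ (lam₁ * ‖TW h‖ + lam₂ * ‖TV h‖ + mu * ‖h‖) * ‖f‖ :=
            mul_le_mul_of_nonneg_right (hpert h) (norm_nonneg f)
          _ ≤ ε * Real.sqrt (∑ i ∈ F, ‖x i‖ ^ 2) * ‖f‖ :=
            mul_le_mul_of_nonneg_right h3 (norm_nonneg f)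
      have hsqrt : Real.sqrt (∑ i ∈ F, ‖x i‖ ^ 2) ≤ ε * ‖f‖ := by
        by_cases h0 : (∑ i ∈ F, ‖x i‖ ^ 2) = 0
        · rw [h0, Real.sqrt_zero]
          exact mul_nonneg hεpos.le (norm_nonneg f)
        · have hpos : 0 < ∑ i ∈ F, ‖x i‖ ^ 2 := lt_of_le_of_ne hSnn (Ne.symm h0)
          have hs : 0 < Real.sqrt (∑ i ∈ F, ‖x i‖ ^ 2) := Real.sqrt_pos.mpr hpos
          have hms := Real.mul_self_sqrt hSnn
          have h' : Real.sqrt (∑ i ∈ F, ‖x i‖ ^ 2) * Real.sqrt (∑ i ∈ F, ‖x i‖ ^ 2)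
              ≤ (ε * ‖f‖) * Real.sqrt (∑ i ∈ F, ‖x i‖ ^ 2) := by
            rw [hms]
            calc (∑ i ∈ F, ‖x i‖ ^ 2) ≤ ε * Real.sqrt (∑ i ∈ F, ‖x i‖ ^ 2) * ‖f‖ := hle
              _ = (ε * ‖f‖) * Real.sqrt (∑ i ∈ F, ‖x i‖ ^ 2) := by ring
          exact le_of_mul_le_mul_right h' hs
      calc (∑ i ∈ F, ‖x i‖ ^ 2) = Real.sqrt (∑ i ∈ F, ‖x i‖ ^ 2) ^ 2 :=
            (Real.sq_sqrt hSnn).symm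
        _ ≤ (ε * ‖f‖) ^ 2 := pow_le_pow_left₀ (Real.sqrt_nonneg _) hsqrt 2
    have hxsum : Summable (fun i => ‖x i‖ ^ 2) :=
      summable_of_sum_le (fun i => sq_nonneg _) key
    have hxts : ∑' i : I, ‖x i‖ ^ 2 ≤ (ε * ‖f‖) ^ 2 := Summable.tsum_le_of_sum_le hxsum key
    -- Cauchy-Schwarz bound on finite sums over σᶜ
    have hd : ∀ G : Finset ↥σᶜ,
        ∑ i ∈ G, (ν (i:I) ^ 2 * ‖(Submodule.orthogonalProjection (W (i:I)) f : H)‖ ^ 2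
          - μ (i:I) ^ 2 * ‖(Submodule.orthogonalProjection (V (i:I)) f : H)‖ ^ 2)
        ≤ ε * (Real.sqrt BW + Real.sqrt BV) * ‖f‖ ^ 2 := by
      intro G
      set p : ↥σᶜ → ℝ := fun i => ν (i:I) * ‖(Submodule.orthogonalProjection (W (i:I)) f : H)‖ with hp
      set q : ↥σᶜ → ℝ := fun i => μ (i:I) * ‖(Submodule.orthogonalProjection (V (i:I)) f : H)‖ with hq
      have hpnn : ∀ i, 0 ≤ p i := fun i => mul_nonneg (hν _).le (norm_nonneg _)
      have hqnn : ∀ i, 0 ≤ q i := fun i => mul_nonneg (hμ _).le (norm_nonneg _)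
      have hstep1 : ∑ i ∈ G, (ν (i:I) ^ 2 * ‖(Submodule.orthogonalProjection (W (i:I)) f : H)‖ ^ 2
          - μ (i:I) ^ 2 * ‖(Submodule.orthogonalProjection (V (i:I)) f : H)‖ ^ 2)
          ≤ ∑ i ∈ G, |p i - q i| * (p i + q i) := by
        refine Finset.sum_le_sum fun i _ => ?_
        have e : ν (i:I) ^ 2 * ‖(Submodule.orthogonalProjection (W (i:I)) f : H)‖ ^ 2
            - μ (i:I) ^ 2 * ‖(Submodule.orthogonalProjection (V (i:I)) f : H)‖ ^ 2
            = (p i - q i) * (p i + q i) := by rw [hp, hq]; ring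
        rw [e]
        exact mul_le_mul_of_nonneg_right (le_abs_self _) (add_nonneg (hpnn i) (hqnn i))
      have hstep2 : ∑ i ∈ G, |p i - q i| * (p i + q i)
          ≤ Real.sqrt (∑ i ∈ G, |p i - q i| ^ 2) * Real.sqrt (∑ i ∈ G, (p i + q i) ^ 2) :=
        cs_sqrt G _ _ (Finset.sum_nonneg fun i _ =>
          mul_nonneg (abs_nonneg _) (add_nonneg (hpnn i) (hqnn i)))
      have habs : ∀ i : ↥σᶜ, |p i - q i| ≤ ‖x (i:I)‖ := by
        intro i
        have e1 : p i = ‖ν (i:I) • (Submodule.orthogonalProjection (W (i:I)) f : H)‖ := by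
          rw [hp, norm_smul, Real.norm_eq_abs, abs_of_pos (hν _)]
        have e2 : q i = ‖μ (i:I) • (Submodule.orthogonalProjection (V (i:I)) f : H)‖ := by
          rw [hq, norm_smul, Real.norm_eq_abs, abs_of_pos (hμ _)]
        rw [hx, e1, e2]
        exact abs_norm_sub_norm_le _ _
      have hstep3 : Real.sqrt (∑ i ∈ G, |p i - q i| ^ 2) ≤ ε * ‖f‖ := by
        have e : ∑ i ∈ G, |p i - q i| ^ 2 ≤ (ε * ‖f‖) ^ 2 :=
          calc ∑ i ∈ G, |p i - q i| ^ 2 ≤ ∑ i ∈ G, ‖x (i:I)‖ ^ 2 :=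
                Finset.sum_le_sum fun i _ => pow_le_pow_left₀ (abs_nonneg _) (habs i) 2
            _ = ∑ j ∈ G.map (Function.Embedding.subtype _), ‖x j‖ ^ 2 :=
                (Finset.sum_map G (Function.Embedding.subtype _) (fun j => ‖x j‖ ^ 2)).symm
            _ ≤ ∑' i : I, ‖x i‖ ^ 2 :=
                Summable.sum_le_tsum _ (fun i _ => sq_nonneg _) hxsum
            _ ≤ (ε * ‖f‖) ^ 2 := hxts
        refine le_trans (Real.sqrt_le_sqrt e) ?_
        rw [Real.sqrt_sq (mul_nonneg hεpos.le (norm_nonneg f))]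
      have hPsum : ∑ i ∈ G, p i ^ 2 ≤ BW * ‖f‖ ^ 2 := by
        have e : ∀ i ∈ G, p i ^ 2
            = ν (i:I) ^ 2 * ‖(Submodule.orthogonalProjection (W (i:I)) f : H)‖ ^ 2 :=
          fun i _ => by rw [hp]; ring
        rw [Finset.sum_congr rfl e]
        calc ∑ i ∈ G, ν (i:I) ^ 2 * ‖(Submodule.orthogonalProjection (W (i:I)) f : H)‖ ^ 2
            = ∑ j ∈ G.map (Function.Embedding.subtype _),
                ν j ^ 2 * ‖(Submodule.orthogonalProjection (W j) f : H)‖ ^ 2 :=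
              (Finset.sum_map G (Function.Embedding.subtype _)
                (fun j => ν j ^ 2 * ‖(Submodule.orthogonalProjection (W j) f : H)‖ ^ 2)).symm
          _ ≤ ∑' i : I, ν i ^ 2 * ‖(Submodule.orthogonalProjection (W i) f : H)‖ ^ 2 :=
              Summable.sum_le_tsum _ (fun i _ => by positivity) (hsW f)
          _ ≤ BW * ‖f‖ ^ 2 := (hW f).2
      have hQsum : ∑ i ∈ G, q i ^ 2 ≤ BV * ‖f‖ ^ 2 := by
        have e : ∀ i ∈ G, q i ^ 2
            = μ (i:I) ^ 2 * ‖(Submodule.orthogonalProjection (V (i:I)) f : H)‖ ^ 2 :=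
          fun i _ => by rw [hq]; ring
        rw [Finset.sum_congr rfl e]
        calc ∑ i ∈ G, μ (i:I) ^ 2 * ‖(Submodule.orthogonalProjection (V (i:I)) f : H)‖ ^ 2
            = ∑ j ∈ G.map (Function.Embedding.subtype _),
                μ j ^ 2 * ‖(Submodule.orthogonalProjection (V j) f : H)‖ ^ 2 :=
              (Finset.sum_map G (Function.Embedding.subtype _)
                (fun j => μ j ^ 2 * ‖(Submodule.orthogonalProjection (V j) f : H)‖ ^ 2)).symm
          _ ≤ ∑' i : I, μ i ^ 2 * ‖(Submodule.orthogonalProjection (V i) f : H)‖ ^ 2 :=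
              Summable.sum_le_tsum _ (fun i _ => by positivity) (hsV f)
          _ ≤ BV * ‖f‖ ^ 2 := (hV f).2
      have hstep4 : Real.sqrt (∑ i ∈ G, (p i + q i) ^ 2)
          ≤ (Real.sqrt BW + Real.sqrt BV) * ‖f‖ := by
        refine le_trans (minkowski_sqrt G p q hpnn hqnn) ?_
        have h5 : Real.sqrt (∑ i ∈ G, p i ^ 2) ≤ Real.sqrt BW * ‖f‖ := by
          refine le_trans (Real.sqrt_le_sqrt hPsum) ?_
          rw [Real.sqrt_mul hBW.le, Real.sqrt_sq (norm_nonneg f)]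
        have h6 : Real.sqrt (∑ i ∈ G, q i ^ 2) ≤ Real.sqrt BV * ‖f‖ := by
          refine le_trans (Real.sqrt_le_sqrt hQsum) ?_
          rw [Real.sqrt_mul hBV.le, Real.sqrt_sq (norm_nonneg f)]
        rw [add_mul]
        exact add_le_add h5 h6
      calc ∑ i ∈ G, (ν (i:I) ^ 2 * ‖(Submodule.orthogonalProjection (W (i:I)) f : H)‖ ^ 2
            - μ (i:I) ^ 2 * ‖(Submodule.orthogonalProjection (V (i:I)) f : H)‖ ^ 2)
          ≤ Real.sqrt (∑ i ∈ G, |p i - q i| ^ 2) * Real.sqrt (∑ i ∈ G, (p i + q i) ^ 2) :=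
            le_trans hstep1 hstep2
        _ ≤ (ε * ‖f‖) * ((Real.sqrt BW + Real.sqrt BV) * ‖f‖) :=
            mul_le_mul hstep3 hstep4 (Real.sqrt_nonneg _)
              (mul_nonneg hεpos.le (norm_nonneg f))
        _ = ε * (Real.sqrt BW + Real.sqrt BV) * ‖f‖ ^ 2 := by ring
    have hdsum : Summable (fun i : ↥σᶜ =>
        ν (i:I) ^ 2 * ‖(Submodule.orthogonalProjection (W (i:I)) f : H)‖ ^ 2
          - μ (i:I) ^ 2 * ‖(Submodule.orthogonalProjection (V (i:I)) f : H)‖ ^ 2) :=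
      Summable.sub ((hsW f).subtype σᶜ) ((hsV f).subtype σᶜ)
    have hKle : ∑' i : ↥σᶜ, (ν (i:I) ^ 2 * ‖(Submodule.orthogonalProjection (W (i:I)) f : H)‖ ^ 2
        - μ (i:I) ^ 2 * ‖(Submodule.orthogonalProjection (V (i:I)) f : H)‖ ^ 2)
        ≤ ε * (Real.sqrt BW + Real.sqrt BV) * ‖f‖ ^ 2 :=
      Summable.tsum_le_of_sum_le hdsum hd
    have hKsplit : ∑' i : ↥σᶜ, (ν (i:I) ^ 2 * ‖(Submodule.orthogonalProjection (W (i:I)) f : H)‖ ^ 2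
        - μ (i:I) ^ 2 * ‖(Submodule.orthogonalProjection (V (i:I)) f : H)‖ ^ 2)
        = (∑' i : ↥σᶜ, ν (i:I) ^ 2 * ‖(Submodule.orthogonalProjection (W (i:I)) f : H)‖ ^ 2)
          - (∑' i : ↥σᶜ, μ (i:I) ^ 2 * ‖(Submodule.orthogonalProjection (V (i:I)) f : H)‖ ^ 2) :=
      Summable.tsum_sub ((hsW f).subtype σᶜ) ((hsV f).subtype σᶜ)
    have hεAW : ε * (Real.sqrt BW + Real.sqrt BV) ≤ AW / 2 := by
      rw [div_mul_eq_mul_div, div_mul_eq_mul_div, div_le_one hAW] at hmain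
      nlinarith [hmain]
    have hfin : ε * (Real.sqrt BW + Real.sqrt BV) * ‖f‖ ^ 2 ≤ (AW / 2) * ‖f‖ ^ 2 :=
      mul_le_mul_of_nonneg_right hεAW (by positivity)
    have t1 : (∑' i : ↥σᶜ, ν (i:I) ^ 2 * ‖(Submodule.orthogonalProjection (W (i:I)) f : H)‖ ^ 2)
        - (∑' i : ↥σᶜ, μ (i:I) ^ 2 * ‖(Submodule.orthogonalProjection (V (i:I)) f : H)‖ ^ 2)
        ≤ ε * (Real.sqrt BW + Real.sqrt BV) * ‖f‖ ^ 2 := by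
      rw [← hKsplit]; exact hKle
    have t2 : ε * (Real.sqrt BW + Real.sqrt BV) * ‖f‖ ^ 2 ≤ AW / 2 * ‖f‖ ^ 2 := hfin
    have t3 := (hW f).1
    have t4 := hsplitA
    clear_value ε x
    linarith [t2, t3, t4, t1]
  · -- upper bound
    have e : (BW + BV) * ‖f‖ ^ 2 = BW * ‖f‖ ^ 2 + BV * ‖f‖ ^ 2 := by ring
    linarith [hsplitA, hsplitB, hnnAc, hnnB, (hW f).2, (hV f).2, e.le, e.ge]
end

section
/- Let H be a separable complex Hilbert space and let {W_i}_{i∈I} and {V_i}_{i∈I} be fusion frames for H with weights {ν_i} and {μ_i} and fusion frame bounds (A_W, B_W) and (A_V, B_V) respectively. For σ ⊆ I write S_W^σ f = Σ_{i∈σ} ν_i² P_{W_i} f and S_V^σ f = Σ_{i∈σ} μ_i² P_{V_i} f. Suppose there exist constants 0 < λ, μ, γ < 1 with λ B_W + μ B_V + γ √B_W < A_W such that for every σ ⊆ I and every f ∈ H, ‖S_W^σ f − S_V^σ f‖ ≤ λ‖S_W^σ f‖ + μ‖S_V^σ f‖ + γ·(Σ_{i∈σ} ν_i² ‖P_{W_i}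 f‖²)^{1/2}. Then {W_i}_{i∈I} and {V_i}_{i∈I} are woven fusion frames for H with universal bounds A_W − λB_W − μB_V − γ√B_W and B_W + λB_W + μB_V + γ√B_W. -/
open scoped ComplexInnerProductSpace

section Helpers

/-- Cauchy–Schwarz for tsums of nonnegative reals. -/
lemma wf_tsum_CS {ι : Type*} (a b : ι → ℝ) (han : ∀ i, 0 ≤ a i) (hbn : ∀ i, 0 ≤ b i)
    (ha : Summable fun i => a i ^ 2) (hb : Summable fun i => b i ^ 2) :
    ∑' i, a i * b i ≤ Real.sqrt (∑' i, a i ^ 2) * Real.sqrt (∑' i, b i ^ 2) := by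
  have hab : Summable fun i => a i * b i := by
    refine Summable.of_nonneg_of_le (fun i => mul_nonneg (han i) (hbn i))
      (fun i => ?_) (ha.add hb)
    nlinarith [sq_nonneg (a i - b i), sq_nonneg (a i + b i)]
  refine hab.tsum_le_of_sum_le fun F => ?_
  have hcs := Finset.sum_mul_sq_le_sq_mul_sq F a b
  have h1 : ∑ i ∈ F, a i * b i ≤ Real.sqrt (∑ i ∈ F, a i ^ 2) * Real.sqrt (∑ i ∈ F, b i ^ 2) := by
    have hs : 0 ≤ ∑ i ∈ F, a i * b i :=
      Finset.sum_nonneg fun i _ => mul_nonneg (han i) (hbn i)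
    have := Real.sqrt_le_sqrt hcs
    rwa [Real.sqrt_sq hs, Real.sqrt_mul (Finset.sum_nonneg fun i _ => sq_nonneg _)] at this
  refine h1.trans (mul_le_mul ?_ ?_ (Real.sqrt_nonneg _) (Real.sqrt_nonneg _))
  · exact Real.sqrt_le_sqrt (Summable.sum_le_tsum F (fun i _ => sq_nonneg _) ha)
  · exact Real.sqrt_le_sqrt (Summable.sum_le_tsum F (fun i _ => sq_nonneg _) hb)

variable {H : Type*} [NormedAddCommGroup H] [InnerProductSpace ℂ H] [CompleteSpace H]

/-- `⟪P u, x⟫ = ⟪P u, P x⟫` for an orthogonal projection `P`. -/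
lemma wf_inner_proj_left (K : Submodule ℂ H) [CompleteSpace K] (u x : H) :
    (inner ℂ ((Submodule.orthogonalProjectionOnto K u : H)) x : ℂ)
      = inner ℂ ((Submodule.orthogonalProjectionOnto K u : H)) ((Submodule.orthogonalProjectionOnto K x : H)) := by
  have h0 : (inner ℂ ((Submodule.orthogonalProjectionOnto K u : H)) (x - (Submodule.orthogonalProjectionOnto K x : H)) : ℂ) = 0 :=
    Submodule.inner_right_of_mem_orthogonal (Submodule.coe_mem _)
      (K.sub_starProjection_mem_orthogonal x)
  rw [inner_sub_right, sub_eq_zero] at h0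
  exact h0

/-- `⟪u, P x⟫ = ⟪P u, P x⟫` for an orthogonal projection `P`. -/
lemma wf_inner_proj_right (K : Submodule ℂ H) [CompleteSpace K] (u x : H) :
    (inner ℂ u ((Submodule.orthogonalProjectionOnto K x : H)) : ℂ)
      = inner ℂ ((Submodule.orthogonalProjectionOnto K u : H)) ((Submodule.orthogonalProjectionOnto K x : H)) := by
  have h0 : (inner ℂ (u - (Submodule.orthogonalProjectionOnto K u : H)) ((Submodule.orthogonalProjectionOnto K x : H)) : ℂ) = 0 :=
    K.starProjection_inner_eq_zero u _ (Submodule.coe_mem _)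
  rw [inner_sub_left, sub_eq_zero] at h0
  exact h0

variable {ι : Type*} (K : ι → Submodule ℂ H) [∀ i, CompleteSpace (K i)] (w : ι → ℝ) {B : ℝ}

/-- Bound on finite partial sums of the weighted projection series. -/
lemma wf_finset_norm_sq_le (hB : 0 ≤ B)
    (hsum : ∀ g : H, Summable fun i => w i ^ 2 * ‖(Submodule.orthogonalProjectionOnto (K i) g : H)‖ ^ 2)
    (hub : ∀ g : H, ∑' i, w i ^ 2 * ‖(Submodule.orthogonalProjectionOnto (K i) g : H)‖ ^ 2 ≤ B * ‖g‖ ^ 2)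
    (F : Finset ι) (g : H) :
    ‖∑ i ∈ F, w i ^ 2 • (Submodule.orthogonalProjectionOnto (K i) g : H)‖ ^ 2 ≤
      B * ∑ i ∈ F, w i ^ 2 * ‖(Submodule.orthogonalProjectionOnto (K i) g : H)‖ ^ 2 := by
  classical
  set S : H := ∑ i ∈ F, w i ^ 2 • (Submodule.orthogonalProjectionOnto (K i) g : H) with hS
  set cF : ℝ := ∑ i ∈ F, w i ^ 2 * ‖(Submodule.orthogonalProjectionOnto (K i) g : H)‖ ^ 2 with hcF
  set dF : ℝ := ∑ i ∈ F, w i ^ 2 * ‖(Submodule.orthogonalProjectionOnto (K i) S : H)‖ ^ 2 with hdF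
  have hcF0 : 0 ≤ cF := Finset.sum_nonneg fun i _ => by positivity
  have hdF0 : 0 ≤ dF := Finset.sum_nonneg fun i _ => by positivity
  -- ‖S‖² = re ⟪S, S⟫ = ∑ w² re ⟪P_i g, P_i S⟫ ≤ ∑ w² ‖P_i g‖ ‖P_i S‖
  have hX : ‖S‖ ^ 2 ≤ ∑ i ∈ F,
      (w i * ‖(Submodule.orthogonalProjectionOnto (K i) g : H)‖) * (w i * ‖(Submodule.orthogonalProjectionOnto (K i) S : H)‖) := by
    have h1 : (‖S‖ : ℝ) ^ 2 = Complex.re (inner ℂ S S : ℂ) := (inner_self_eq_norm_sq (𝕜 := ℂ) S).symm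
    have h2 : (inner ℂ S S : ℂ) = ∑ i ∈ F, ((w i ^ 2 : ℝ) : ℂ) * inner ℂ ((Submodule.orthogonalProjectionOnto (K i) g : H))
        ((Submodule.orthogonalProjectionOnto (K i) S : H)) := by
      rw [hS, sum_inner]
      refine Finset.sum_congr rfl fun i _ => ?_
      rw [show (w i ^ 2 : ℝ) • (Submodule.orthogonalProjectionOnto (K i) g : H)
            = ((w i ^ 2 : ℝ) : ℂ) • (Submodule.orthogonalProjectionOnto (K i) g : H) from rfl,
        inner_smul_left, wf_inner_proj_left]
      simp
    rw [h1, h2, Complex.re_sum]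
    refine Finset.sum_le_sum fun i _ => ?_
    have h3 : Complex.re (((w i ^ 2 : ℝ) : ℂ) * inner ℂ ((Submodule.orthogonalProjectionOnto (K i) g : H))
        ((Submodule.orthogonalProjectionOnto (K i) S : H)))
        = w i ^ 2 * Complex.re (inner ℂ ((Submodule.orthogonalProjectionOnto (K i) g : H))
          ((Submodule.orthogonalProjectionOnto (K i) S : H)) : ℂ) := by
      simp [← Complex.ofReal_pow]
    rw [h3]
    have h4 : Complex.re (inner ℂ ((Submodule.orthogonalProjectionOnto (K i) g : H))
        ((Submodule.orthogonalProjectionOnto (K i) S : H)) : ℂ)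
        ≤ ‖(Submodule.orthogonalProjectionOnto (K i) g : H)‖ * ‖(Submodule.orthogonalProjectionOnto (K i) S : H)‖ := by
      refine (Complex.re_le_norm _).trans ?_
      exact norm_inner_le_norm _ _
    nlinarith [sq_nonneg (w i), norm_nonneg ((Submodule.orthogonalProjectionOnto (K i) g : H)),
      norm_nonneg ((Submodule.orthogonalProjectionOnto (K i) S : H)), sq_abs (w i)]
  have hcs := Finset.sum_mul_sq_le_sq_mul_sq F
    (fun i => w i * ‖(Submodule.orthogonalProjectionOnto (K i) g : H)‖)
    (fun i => w i * ‖(Submodule.orthogonalProjectionOnto (K i) S : H)‖)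
  have hsq1 : ∑ i ∈ F, (w i * ‖(Submodule.orthogonalProjectionOnto (K i) g : H)‖) ^ 2 = cF := by
    rw [hcF]; exact Finset.sum_congr rfl fun i _ => by ring
  have hsq2 : ∑ i ∈ F, (w i * ‖(Submodule.orthogonalProjectionOnto (K i) S : H)‖) ^ 2 = dF := by
    rw [hdF]; exact Finset.sum_congr rfl fun i _ => by ring
  rw [hsq1, hsq2] at hcs
  have hd : dF ≤ B * ‖S‖ ^ 2 :=
    (Summable.sum_le_tsum F (fun i _ => by positivity) (hsum S)).trans (hub S)
  -- now ‖S‖² ≤ X, X² ≤ cF * dF, dF ≤ B ‖S‖²  ⟹  ‖S‖² ≤ B * cF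
  set t : ℝ := ‖S‖ ^ 2 with ht
  have ht0 : 0 ≤ t := sq_nonneg _
  set X : ℝ := ∑ i ∈ F,
      (w i * ‖(Submodule.orthogonalProjectionOnto (K i) g : H)‖) * (w i * ‖(Submodule.orthogonalProjectionOnto (K i) S : H)‖)
  rcases ht0.eq_or_lt with h | h
  · rw [← h]; positivity
  · have hX0 : 0 ≤ X := le_trans ht0 hX
    have h5 : t * t ≤ (B * cF) * t := by nlinarith
    exact le_of_mul_le_mul_right (by linarith [h5]) h

/-- Summability of the weighted projection series. -/
lemma wf_summable_vec (hB : 0 < B)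
    (hsum : ∀ g : H, Summable fun i => w i ^ 2 * ‖(Submodule.orthogonalProjectionOnto (K i) g : H)‖ ^ 2)
    (hub : ∀ g : H, ∑' i, w i ^ 2 * ‖(Submodule.orthogonalProjectionOnto (K i) g : H)‖ ^ 2 ≤ B * ‖g‖ ^ 2)
    (g : H) : Summable fun i => w i ^ 2 • (Submodule.orthogonalProjectionOnto (K i) g : H) := by
  rw [summable_iff_vanishing_norm]
  intro ε hε
  obtain ⟨s, hs⟩ := summable_iff_vanishing_norm.1 (hsum g) (ε ^ 2 / B) (by positivity)
  refine ⟨s, fun t htdisj => ?_⟩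
  have h1 := wf_finset_norm_sq_le K w hB.le hsum hub t g
  have h2 := hs t htdisj
  have h3 : ∑ i ∈ t, w i ^ 2 * ‖(Submodule.orthogonalProjectionOnto (K i) g : H)‖ ^ 2 < ε ^ 2 / B := by
    have : |∑ i ∈ t, w i ^ 2 * ‖(Submodule.orthogonalProjectionOnto (K i) g : H)‖ ^ 2|
        = ∑ i ∈ t, w i ^ 2 * ‖(Submodule.orthogonalProjectionOnto (K i) g : H)‖ ^ 2 :=
      abs_of_nonneg (Finset.sum_nonneg fun i _ => by positivity)
    rw [Real.norm_eq_abs, this] at h2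
    exact h2
  have h4 : ‖∑ i ∈ t, w i ^ 2 • (Submodule.orthogonalProjectionOnto (K i) g : H)‖ ^ 2 < ε ^ 2 := by
    calc ‖∑ i ∈ t, w i ^ 2 • (Submodule.orthogonalProjectionOnto (K i) g : H)‖ ^ 2
        ≤ B * ∑ i ∈ t, w i ^ 2 * ‖(Submodule.orthogonalProjectionOnto (K i) g : H)‖ ^ 2 := h1
      _ < B * (ε ^ 2 / B) := by exact (mul_lt_mul_iff_right₀ hB).2 h3
      _ = ε ^ 2 := by field_simp
  nlinarith [norm_nonneg (∑ i ∈ t, w i ^ 2 • (Submodule.orthogonalProjectionOnto (K i) g : H))]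

/-- Norm bound for the weighted projection series. -/
lemma wf_norm_tsum_le (hB : 0 < B)
    (hsum : ∀ g : H, Summable fun i => w i ^ 2 * ‖(Submodule.orthogonalProjectionOnto (K i) g : H)‖ ^ 2)
    (hub : ∀ g : H, ∑' i, w i ^ 2 * ‖(Submodule.orthogonalProjectionOnto (K i) g : H)‖ ^ 2 ≤ B * ‖g‖ ^ 2)
    (g : H) : ‖∑' i, w i ^ 2 • (Submodule.orthogonalProjectionOnto (K i) g : H)‖ ≤ B * ‖g‖ := by
  have hvs := wf_summable_vec K w hB hsum hub g
  have htends : Filter.Tendsto (fun F : Finset ι =>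
      ‖∑ i ∈ F, w i ^ 2 • (Submodule.orthogonalProjectionOnto (K i) g : H)‖) Filter.atTop
      (nhds ‖∑' i, w i ^ 2 • (Submodule.orthogonalProjectionOnto (K i) g : H)‖) := hvs.hasSum.norm
  refine le_of_tendsto htends (Filter.Eventually.of_forall fun F => ?_)
  have h1 := wf_finset_norm_sq_le K w hB.le hsum hub F g
  have h2 : ∑ i ∈ F, w i ^ 2 * ‖(Submodule.orthogonalProjectionOnto (K i) g : H)‖ ^ 2 ≤ B * ‖g‖ ^ 2 :=
    (Summable.sum_le_tsum F (fun i _ => by positivity) (hsum g)).trans (hub g)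
  have h3 : ‖∑ i ∈ F, w i ^ 2 • (Submodule.orthogonalProjectionOnto (K i) g : H)‖ ^ 2 ≤ (B * ‖g‖) ^ 2 := by
    nlinarith
  have h4 := Real.sqrt_le_sqrt h3
  rwa [Real.sqrt_sq (norm_nonneg _), Real.sqrt_sq (by positivity)] at h4

/-- The real part of `⟪g, ∑' wᵢ² P_i g⟫` is the sum of `wᵢ²‖P_i g‖²`. -/
lemma wf_re_inner_tsum (hB : 0 < B)
    (hsum : ∀ g : H, Summable fun i => w i ^ 2 * ‖(Submodule.orthogonalProjectionOnto (K i) g : H)‖ ^ 2)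
    (hub : ∀ g : H, ∑' i, w i ^ 2 * ‖(Submodule.orthogonalProjectionOnto (K i) g : H)‖ ^ 2 ≤ B * ‖g‖ ^ 2)
    (g : H) :
    Complex.re (inner ℂ g (∑' i, w i ^ 2 • (Submodule.orthogonalProjectionOnto (K i) g : H)) : ℂ)
      = ∑' i, w i ^ 2 * ‖(Submodule.orthogonalProjectionOnto (K i) g : H)‖ ^ 2 := by
  have hvs := wf_summable_vec K w hB hsum hub g
  have h1 : (inner ℂ g (∑' i, w i ^ 2 • (Submodule.orthogonalProjectionOnto (K i) g : H)) : ℂ)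
      = ∑' i, (inner ℂ g (w i ^ 2 • (Submodule.orthogonalProjectionOnto (K i) g : H)) : ℂ) := by
    have := (innerSL ℂ g).map_tsum hvs
    simpa only [innerSL_apply_apply] using this
  have h2 : ∀ i, (inner ℂ g (w i ^ 2 • (Submodule.orthogonalProjectionOnto (K i) g : H)) : ℂ)
      = ((w i ^ 2 * ‖(Submodule.orthogonalProjectionOnto (K i) g : H)‖ ^ 2 : ℝ) : ℂ) := by
    intro i
    rw [show (w i ^ 2 : ℝ) • (Submodule.orthogonalProjectionOnto (K i) g : H)
          = ((w i ^ 2 : ℝ) : ℂ) • (Submodule.orthogonalProjectionOnto (K i) g : H) from rfl,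
      inner_smul_right, wf_inner_proj_right, inner_self_eq_norm_sq_to_K]
    norm_cast
    exact (Complex.ofReal_mul _ _).symm
  have h3 : (∑' i, (inner ℂ g (w i ^ 2 • (Submodule.orthogonalProjectionOnto (K i) g : H)) : ℂ))
      = ((∑' i, w i ^ 2 * ‖(Submodule.orthogonalProjectionOnto (K i) g : H)‖ ^ 2 : ℝ) : ℂ) := by
    rw [tsum_congr h2]
    exact (Complex.ofRealCLM.map_tsum (hsum g)).symm
  rw [h1, h3, Complex.ofReal_re]

end Helpers

/-- Perturbation of partial fusion frame operators: if `‖S_W^σ f − S_V^σ f‖` is controlled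
by `λ‖S_W^σ f‖ + μ‖S_V^σ f‖ + γ(Σ_{i∈σ} ν_i²‖P_{W_i}f‖²)^{1/2}` with
`λB_W + μB_V + γ√B_W < A_W`, then the fusion frames are woven fusion frames. -/
theorem woven_fusion_frames_of_partial_frame_operator_perturbation
    {H : Type*} [NormedAddCommGroup H] [InnerProductSpace ℂ H] [CompleteSpace H]
    [TopologicalSpace.SeparableSpace H]
    {I : Type*} [Countable I]
    (W V : I → Submodule ℂ H) [∀ i, CompleteSpace (W i)] [∀ i, CompleteSpace (V i)]
    (ν μ : I → ℝ) (hν : ∀ i, 0 < ν i) (hμ : ∀ i, 0 < μ i)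
    (AW BW AV BV : ℝ) (hAW : 0 < AW) (hBW : 0 < BW) (hAV : 0 < AV) (hBV : 0 < BV)
    (hW : ∀ f : H,
      AW * ‖f‖ ^ 2 ≤ ∑' i : I, ν i ^ 2 * ‖(Submodule.orthogonalProjectionOnto (W i) f : H)‖ ^ 2 ∧
      ∑' i : I, ν i ^ 2 * ‖(Submodule.orthogonalProjectionOnto (W i) f : H)‖ ^ 2 ≤ BW * ‖f‖ ^ 2)
    (hV : ∀ f : H,
      AV * ‖f‖ ^ 2 ≤ ∑' i : I, μ i ^ 2 * ‖(Submodule.orthogonalProjectionOnto (V i) f : H)‖ ^ 2 ∧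
      ∑' i : I, μ i ^ 2 * ‖(Submodule.orthogonalProjectionOnto (V i) f : H)‖ ^ 2 ≤ BV * ‖f‖ ^ 2)
    (lam mu gam : ℝ)
    (hlam : 0 < lam) (hlam' : lam < 1) (hmu : 0 < mu) (hmu' : mu < 1)
    (hgam : 0 < gam) (hgam' : gam < 1)
    (hmain : lam * BW + mu * BV + gam * Real.sqrt BW < AW)
    (hpert : ∀ σ : Set I, ∀ f : H,
      ‖(∑' i : σ, ν (i : I) ^ 2 • (Submodule.orthogonalProjectionOnto (W (i : I)) f : H)) -
          (∑' i : σ, μ (i : I) ^ 2 • (Submodule.orthogonalProjectionOnto (V (i : I)) f : H))‖ ≤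
        lam * ‖∑' i : σ, ν (i : I) ^ 2 • (Submodule.orthogonalProjectionOnto (W (i : I)) f : H)‖ +
          mu * ‖∑' i : σ, μ (i : I) ^ 2 • (Submodule.orthogonalProjectionOnto (V (i : I)) f : H)‖ +
          gam * Real.sqrt (∑' i : σ, ν (i : I) ^ 2 * ‖(Submodule.orthogonalProjectionOnto (W (i : I)) f : H)‖ ^ 2)) :
    ∀ σ : Set I, ∀ f : H,
      (AW - lam * BW - mu * BV - gam * Real.sqrt BW) * ‖f‖ ^ 2 ≤
        (∑' i : σ, ν (i : I) ^ 2 * ‖(Submodule.orthogonalProjectionOnto (W (i : I)) f : H)‖ ^ 2) +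
          (∑' i : ↥σᶜ, μ (i : I) ^ 2 * ‖(Submodule.orthogonalProjectionOnto (V (i : I)) f : H)‖ ^ 2) ∧
      (∑' i : σ, ν (i : I) ^ 2 * ‖(Submodule.orthogonalProjectionOnto (W (i : I)) f : H)‖ ^ 2) +
          (∑' i : ↥σᶜ, μ (i : I) ^ 2 * ‖(Submodule.orthogonalProjectionOnto (V (i : I)) f : H)‖ ^ 2) ≤
        (BW + lam * BW + mu * BV + gam * Real.sqrt BW) * ‖f‖ ^ 2 := by
  -- scalar summability of the frame coefficient series
  have hsW : ∀ g : H, Summable fun i => ν i ^ 2 * ‖(Submodule.orthogonalProjectionOnto (W i) g : H)‖ ^ 2 := by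
    intro g
    by_cases hg : g = 0
    · subst hg
      convert summable_zero with i
      simp
    · by_contra hns
      have h0 := tsum_eq_zero_of_not_summable hns
      have h1 := (hW g).1
      rw [h0] at h1
      have hg' : 0 < ‖g‖ := norm_pos_iff.2 hg
      nlinarith [mul_pos hAW (pow_pos hg' 2)]
  have hsV : ∀ g : H, Summable fun i => μ i ^ 2 * ‖(Submodule.orthogonalProjectionOnto (V i) g : H)‖ ^ 2 := by
    intro g
    by_cases hg : g = 0
    · subst hg
      convert summable_zero with i
      simp
    · by_contra hns
      have h0 := tsum_eq_zero_of_not_summable hns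
      have h1 := (hV g).1
      rw [h0] at h1
      have hg' : 0 < ‖g‖ := norm_pos_iff.2 hg
      nlinarith [mul_pos hAV (pow_pos hg' 2)]
  -- restricted versions
  have hsWs : ∀ (τ : Set I) (g : H),
      Summable fun i : τ => ν (i : I) ^ 2 * ‖(Submodule.orthogonalProjectionOnto (W (i : I)) g : H)‖ ^ 2 :=
    fun τ g => (hsW g).subtype τ
  have hsVs : ∀ (τ : Set I) (g : H),
      Summable fun i : τ => μ (i : I) ^ 2 * ‖(Submodule.orthogonalProjectionOnto (V (i : I)) g : H)‖ ^ 2 :=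
    fun τ g => (hsV g).subtype τ
  have hubWs : ∀ (τ : Set I) (g : H),
      (∑' i : τ, ν (i : I) ^ 2 * ‖(Submodule.orthogonalProjectionOnto (W (i : I)) g : H)‖ ^ 2) ≤ BW * ‖g‖ ^ 2 :=
    fun τ g => (Summable.tsum_subtype_le _ τ (fun i => by positivity) (hsW g)).trans (hW g).2
  have hubVs : ∀ (τ : Set I) (g : H),
      (∑' i : τ, μ (i : I) ^ 2 * ‖(Submodule.orthogonalProjectionOnto (V (i : I)) g : H)‖ ^ 2) ≤ BV * ‖g‖ ^ 2 :=
    fun τ g => (Summable.tsum_subtype_le _ τ (fun i => by positivity) (hsV g)).trans (hV g).2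
  intro σ f
  -- abbreviations
  set u2 : H := ∑' i : ↥σᶜ, ν (i : I) ^ 2 • (Submodule.orthogonalProjectionOnto (W (i : I)) f : H) with hu2
  set v2 : H := ∑' i : ↥σᶜ, μ (i : I) ^ 2 • (Submodule.orthogonalProjectionOnto (V (i : I)) f : H) with hv2
  set a1 : ℝ := ∑' i : σ, ν (i : I) ^ 2 * ‖(Submodule.orthogonalProjectionOnto (W (i : I)) f : H)‖ ^ 2 with ha1
  set a2 : ℝ := ∑' i : ↥σᶜ, ν (i : I) ^ 2 * ‖(Submodule.orthogonalProjectionOnto (W (i : I)) f : H)‖ ^ 2 with ha2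
  set b2 : ℝ := ∑' i : ↥σᶜ, μ (i : I) ^ 2 * ‖(Submodule.orthogonalProjectionOnto (V (i : I)) f : H)‖ ^ 2 with hb2
  -- norm bounds on the partial frame operators
  have hnu2 : ‖u2‖ ≤ BW * ‖f‖ :=
    wf_norm_tsum_le (fun i : ↥σᶜ => W (i : I)) (fun i : ↥σᶜ => ν (i : I)) hBW
      (fun g => hsWs σᶜ g) (fun g => hubWs σᶜ g) f
  have hnv2 : ‖v2‖ ≤ BV * ‖f‖ :=
    wf_norm_tsum_le (fun i : ↥σᶜ => V (i : I)) (fun i : ↥σᶜ => μ (i : I)) hBV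
      (fun g => hsVs σᶜ g) (fun g => hubVs σᶜ g) f
  -- inner ℂ product identities
  have hre2 : Complex.re (inner ℂ f u2 : ℂ) = a2 :=
    wf_re_inner_tsum (fun i : ↥σᶜ => W (i : I)) (fun i : ↥σᶜ => ν (i : I)) hBW
      (fun g => hsWs σᶜ g) (fun g => hubWs σᶜ g) f
  have hre2' : Complex.re (inner ℂ f v2 : ℂ) = b2 :=
    wf_re_inner_tsum (fun i : ↥σᶜ => V (i : I)) (fun i : ↥σᶜ => μ (i : I)) hBV
      (fun g => hsVs σᶜ g) (fun g => hubVs σᶜ g) f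
  -- bound on √a2
  have ha2nn : 0 ≤ a2 := tsum_nonneg fun i => by positivity
  have hsqrt : Real.sqrt a2 ≤ Real.sqrt BW * ‖f‖ := by
    have h1 : a2 ≤ BW * ‖f‖ ^ 2 := hubWs σᶜ f
    have h2 := Real.sqrt_le_sqrt h1
    rwa [Real.sqrt_mul hBW.le, Real.sqrt_sq (norm_nonneg f)] at h2
  -- perturbation bound
  have hKf : ‖u2 - v2‖ ≤ (lam * BW + mu * BV + gam * Real.sqrt BW) * ‖f‖ := by
    have h1 := hpert σᶜ f
    rw [← hu2, ← hv2, ← ha2] at h1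
    have h2 : lam * ‖u2‖ + mu * ‖v2‖ + gam * Real.sqrt a2 ≤
        (lam * BW + mu * BV + gam * Real.sqrt BW) * ‖f‖ := by
      have e1 : lam * ‖u2‖ ≤ lam * (BW * ‖f‖) := by nlinarith
      have e2 : mu * ‖v2‖ ≤ mu * (BV * ‖f‖) := by nlinarith
      have e3 : gam * Real.sqrt a2 ≤ gam * (Real.sqrt BW * ‖f‖) := by nlinarith
      nlinarith
    exact h1.trans h2
  -- difference of the real parts
  have hdiff : |b2 - a2| ≤ (lam * BW + mu * BV + gam * Real.sqrt BW) * ‖f‖ ^ 2 := by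
    have h1 : b2 - a2 = Complex.re (inner ℂ f (v2 - u2) : ℂ) := by
      rw [inner_sub_right, Complex.sub_re, hre2, hre2']
    have h2 : |Complex.re (inner ℂ f (v2 - u2) : ℂ)| ≤ ‖(inner ℂ f (v2 - u2) : ℂ)‖ := by
      exact Complex.abs_re_le_norm _
    have h3 : ‖(inner ℂ f (v2 - u2) : ℂ)‖ ≤ ‖f‖ * ‖v2 - u2‖ := norm_inner_le_norm _ _
    have h4 : ‖v2 - u2‖ = ‖u2 - v2‖ := norm_sub_rev _ _
    rw [h1]
    calc |Complex.re (inner ℂ f (v2 - u2) : ℂ)| ≤ ‖f‖ * ‖v2 - u2‖ := h2.trans h3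
      _ = ‖f‖ * ‖u2 - v2‖ := by rw [h4]
      _ ≤ ‖f‖ * ((lam * BW + mu * BV + gam * Real.sqrt BW) * ‖f‖) := by
          have hK0 : 0 ≤ lam * BW + mu * BV + gam * Real.sqrt BW := by positivity
          exact mul_le_mul_of_nonneg_left hKf (norm_nonneg f)
      _ = (lam * BW + mu * BV + gam * Real.sqrt BW) * ‖f‖ ^ 2 := by ring
  -- splitting of the full sum
  have hsplit : a1 + a2 = ∑' i : I, ν i ^ 2 * ‖(Submodule.orthogonalProjectionOnto (W i) f : H)‖ ^ 2 :=
    (hsW f).tsum_subtype_add_tsum_subtype_compl σ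
  have hlow := (hW f).1
  have hup := (hW f).2
  have habs := abs_le.1 hdiff
  constructor
  · linarith [habs.1, hlow, hsplit]
  · linarith [habs.2, hup, hsplit]
end
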